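/- arXiv:2211.15237 — 9 statements merged into one kernel-verified Lean document; each statement's English description precedes it below -/
import Mathlib

section
/- Let M ≥ 2 and let X = {x_1, …, x_M} be a set of M distinct points in ℝ^d, and let z ∈ ℝ^d \ X. Then for every j ∈ {1, …, M}: F(X) − F({z} ∪ X \ {x_j}) = (M+1)·(‖x_j − (z+Σ(X))/(M+1)‖² − ‖z − (z+Σ(X))/(M+1)‖²), and also F(X) − F({z} ∪ X \ {x_j}) = (M−1)·(‖x_j − (Σ(X)−x_j)/(M−1)‖² − ‖z − (Σ(X)−x_j)/(M−1)‖²). -/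
open Finset Metric MeasureTheory
open scoped BigOperators ENNReal RealInnerProductSpace

noncomputable section

instance {d : ℕ} : DecidableEq (EuclideanSpace ℝ (Fin d)) := Classical.decEq _

/-- `E d` is the Euclidean space `ℝ^d`. -/
abbrev E (d : ℕ) : Type := EuclideanSpace ℝ (Fin d)

/-- `Σ(X)`, the sum of the points of `X`. -/
def csum {d : ℕ} (X : Finset (E d)) : E d := ∑ x ∈ X, x

/-- `μ(X)`, the center of mass of `X`. -/
def cm {d : ℕ} (X : Finset (E d)) : E d := (X.card : ℝ)⁻¹ • csum X

/-- `F(X) = Σ_{i<j} ‖x_i - x_j‖²`, the moment of inertia of `X`. -/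
def inertia {d : ℕ} (X : Finset (E d)) : ℝ := (∑ x ∈ X, ∑ y ∈ X, ‖x - y‖ ^ 2) / 2

/-- `A(X) = max_{w ∈ X} ‖w - μ(X)‖`. -/
def Amax {d : ℕ} (X : Finset (E d)) : ℝ := sSup ((fun w => ‖w - cm X‖) '' (X : Set (E d)))

/-- `D(X) = max_{i ≠ j} ‖x_i - x_j‖`. -/
def Dmax {d : ℕ} (X : Finset (E d)) : ℝ :=
  sSup {r : ℝ | ∃ x ∈ X, ∃ y ∈ X, x ≠ y ∧ r = ‖x - y‖}

/-- `d(X) = min_{i ≠ j} ‖x_i - x_j‖`. -/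
def dmin {d : ℕ} (X : Finset (E d)) : ℝ :=
  sInf {r : ℝ | ∃ x ∈ X, ∃ y ∈ X, x ≠ y ∧ r = ‖x - y‖}

/-- `Keep(X;B) = { x ∈ B : ‖x - μ({x} ∪ X)‖ < max_{s ∈ X} ‖s - μ({x} ∪ X)‖ }`. -/
def Keep {d : ℕ} (X : Finset (E d)) (B : Set (E d)) : Set (E d) :=
  {x ∈ B | ‖x - cm (insert x X)‖ <
    sSup ((fun s => ‖s - cm (insert x X)‖) '' (X : Set (E d)))}

/-- `V(k)`, the Lebesgue measure of the unit ball in `ℝ^k` (so `V 0 = 1`). -/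
def ubVol (k : ℕ) : ℝ := (volume (Metric.ball (0 : EuclideanSpace ℝ (Fin k)) 1)).toReal

lemma inertia_eq' {d : ℕ} (X : Finset (E d)) :
    inertia X = (X.card : ℝ) * (∑ x ∈ X, ‖x‖ ^ 2) - ‖csum X‖ ^ 2 := by
  unfold inertia csum
  have h : ∀ x y : E d, ‖x - y‖ ^ 2 = ‖x‖ ^ 2 + ‖y‖ ^ 2 - 2 * ⟪x, y⟫ := fun x y => by
    rw [@norm_sub_sq_real]; ring
  simp_rw [h]
  rw [← real_inner_self_eq_norm_sq, inner_sum]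
  simp_rw [sum_inner, Finset.sum_sub_distrib, Finset.sum_add_distrib, Finset.sum_const,
    nsmul_eq_mul, ← Finset.mul_sum]
  rw [Finset.sum_comm]
  ring

lemma key_diff {d : ℕ} (a b c : E d) (t : ℝ) :
    ‖a - t • c‖ ^ 2 - ‖b - t • c‖ ^ 2 =
      ‖a‖ ^ 2 - ‖b‖ ^ 2 - 2 * t * (⟪a, c⟫ - ⟪b, c⟫) := by
  rw [@norm_sub_sq_real, @norm_sub_sq_real, real_inner_smul_right, real_inner_smul_right]
  ring

/-- Lemma 1 of the paper (equations (3) and (4)): the two expressions for the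
decrease of the moment of inertia when `x_j` is replaced by `z`. -/
theorem stmt_0 (d : ℕ) (X : Finset (E d)) (hX : 2 ≤ X.card)
    (z : E d) (hz : z ∉ X) (xj : E d) (hxj : xj ∈ X) :
    inertia X - inertia (insert z (X.erase xj)) =
      ((X.card : ℝ) + 1) *
        (‖xj - ((X.card : ℝ) + 1)⁻¹ • (z + csum X)‖ ^ 2 -
         ‖z - ((X.card : ℝ) + 1)⁻¹ • (z + csum X)‖ ^ 2) ∧
    inertia X - inertia (insert z (X.erase xj)) =
      ((X.card : ℝ) - 1) *
        (‖xj - ((X.card : ℝ) - 1)⁻¹ • (csum X - xj)‖ ^ 2 -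
         ‖z - ((X.card : ℝ) - 1)⁻¹ • (csum X - xj)‖ ^ 2) := by
  have hM : (2:ℝ) ≤ (X.card : ℝ) := by exact_mod_cast hX
  set M := (X.card : ℝ) with hMdef
  have hM1 : M - 1 ≠ 0 := by linarith
  have hM2 : M + 1 ≠ 0 := by linarith
  have hzx : z ∉ X.erase xj := fun h => hz (Finset.mem_of_mem_erase h)
  have hcard : (((insert z (X.erase xj)).card : ℕ) : ℝ) = M := by
    rw [Finset.card_insert_of_notMem hzx, Finset.card_erase_of_mem hxj]
    have h1 : 1 ≤ X.card := by omega
    rw [hMdef]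
    push_cast [h1]
    ring
  have hsum : csum (insert z (X.erase xj)) = z + (csum X - xj) := by
    unfold csum
    rw [Finset.sum_insert hzx, Finset.sum_erase_eq_sub hxj]
  have hQ : ∑ x ∈ insert z (X.erase xj), ‖x‖ ^ 2
      = ‖z‖ ^ 2 + ((∑ x ∈ X, ‖x‖ ^ 2) - ‖xj‖ ^ 2) := by
    rw [Finset.sum_insert hzx, Finset.sum_erase_eq_sub hxj]
  have hI := inertia_eq' X
  have hI2 := inertia_eq' (insert z (X.erase xj))
  rw [hcard, hsum, hQ] at hI2
  set S := csum X with hS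
  set Q := ∑ x ∈ X, ‖x‖ ^ 2 with hQdef
  have hexp : ‖z + (S - xj)‖ ^ 2
      = ‖z‖ ^ 2 + ‖S‖ ^ 2 + ‖xj‖ ^ 2 + 2 * ⟪z, S⟫ - 2 * ⟪z, xj⟫ - 2 * ⟪xj, S⟫ := by
    have : z + (S - xj) = (z + S) - xj := by abel
    rw [this, @norm_sub_sq_real, @norm_add_sq_real, inner_add_left, real_inner_comm S xj]
    ring
  constructor
  · rw [hI, hI2, key_diff, inner_add_right, inner_add_right,
      real_inner_self_eq_norm_sq, real_inner_comm z xj, hexp]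
    field_simp
    ring
  · rw [hI, hI2, key_diff, inner_sub_right, inner_sub_right,
      real_inner_self_eq_norm_sq, hexp]
    field_simp
    ring
end
end

section
/- Let B ⊆ ℝ^d be a convex body, let X = {x_1, …, x_M} be a set of M ≥ 2 distinct points of B, and let z ∈ Keep(X;B) with z ∉ X. Then any index j ∈ {1, …, M} which maximizes ‖x_j − (Σ(X)+z)/(M+1)‖ over j ∈ {1, …, M} also minimizes F({z} ∪ (X \ {x_j})) over j ∈ {1, …, M}. -/
open Finset Metric MeasureTheory
open scoped BigOperators ENNReal RealInnerProductSpace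

noncomputable section

lemma inertia_erase {d : ℕ} (S : Finset (E d)) (x : E d) (hx : x ∈ S) :
    inertia (S.erase x) = inertia S - ∑ y ∈ S, ‖x - y‖ ^ 2 := by
  have h1 : ∑ a ∈ S, ∑ y ∈ S, ‖a - y‖ ^ 2
      = (∑ y ∈ S, ‖x - y‖ ^ 2) + ∑ a ∈ S.erase x, ∑ y ∈ S, ‖a - y‖ ^ 2 :=
    (Finset.add_sum_erase S _ hx).symm
  have h2 : ∀ a ∈ S.erase x, ∑ y ∈ S, ‖a - y‖ ^ 2
      = ‖a - x‖ ^ 2 + ∑ y ∈ S.erase x, ‖a - y‖ ^ 2 := fun a _ =>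
    (Finset.add_sum_erase S _ hx).symm
  have h3 : ∑ a ∈ S.erase x, ‖a - x‖ ^ 2 = ∑ y ∈ S, ‖x - y‖ ^ 2 := by
    rw [← Finset.add_sum_erase S (fun y => ‖x - y‖ ^ 2) hx]
    simp [norm_sub_rev]
  have := Finset.sum_congr rfl h2
  rw [Finset.sum_add_distrib, h3] at this
  unfold inertia
  rw [h1, this]
  ring

lemma sum_centered {d : ℕ} (S : Finset (E d)) (hS : S.Nonempty) :
    ∑ y ∈ S, (y - cm S) = 0 := by
  have hcard : (S.card : ℝ) ≠ 0 := by
    exact_mod_cast Finset.card_ne_zero_of_mem hS.choose_spec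
  rw [Finset.sum_sub_distrib, Finset.sum_const, cm, csum]
  rw [← Nat.cast_smul_eq_nsmul ℝ, smul_smul, mul_inv_cancel₀ hcard, one_smul, sub_self]

lemma sum_dist_sq {d : ℕ} (S : Finset (E d)) (hS : S.Nonempty) (x : E d) :
    ∑ y ∈ S, ‖x - y‖ ^ 2
      = S.card * ‖x - cm S‖ ^ 2 + ∑ y ∈ S, ‖y - cm S‖ ^ 2 := by
  have key : ∀ y ∈ S, ‖x - y‖ ^ 2
      = ‖x - cm S‖ ^ 2 - 2 * ⟪x - cm S, y - cm S⟫ + ‖y - cm S‖ ^ 2 := by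
    intro y _
    have h : x - y = (x - cm S) - (y - cm S) := by abel
    rw [h, norm_sub_sq_real]
  rw [Finset.sum_congr rfl key, Finset.sum_add_distrib, Finset.sum_sub_distrib,
    Finset.sum_const, ← Finset.mul_sum, ← inner_sum, sum_centered S hS,
    inner_zero_right, mul_zero, sub_zero, nsmul_eq_mul]

/-- If `z ∈ Keep(X;B)`, then any `x_j ∈ X` maximizing `‖x_j - (Σ(X)+z)/(M+1)‖`
also minimizes `F({z} ∪ (X \ {x_j}))`. -/
theorem stmt_2 (d : ℕ) (B : Set (E d))
    (hBconv : Convex ℝ B) (hBcl : IsClosed B) (hBint : (interior B).Nonempty)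
    (X : Finset (E d)) (hX : 2 ≤ X.card) (hXB : ↑X ⊆ B)
    (z : E d) (hzK : z ∈ Keep X B) (hz : z ∉ X)
    (xj : E d) (hxj : xj ∈ X)
    (hmax : ∀ x ∈ X, ‖x - ((X.card : ℝ) + 1)⁻¹ • (csum X + z)‖ ≤
      ‖xj - ((X.card : ℝ) + 1)⁻¹ • (csum X + z)‖) :
    ∀ x ∈ X, inertia (insert z (X.erase xj)) ≤ inertia (insert z (X.erase x)) := by
  set S := insert z X with hS
  have hSne : S.Nonempty := Finset.insert_nonempty _ _
  have hScard : S.card = X.card + 1 := Finset.card_insert_of_notMem hz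
  have hcm : cm S = ((X.card : ℝ) + 1)⁻¹ • (csum X + z) := by
    unfold cm csum
    rw [hS, Finset.sum_insert hz, hScard]
    push_cast
    rw [add_comm z]
  have key : ∀ x ∈ X, inertia (insert z (X.erase x))
      = inertia S - ((S.card : ℝ) * ‖x - cm S‖ ^ 2 + ∑ y ∈ S, ‖y - cm S‖ ^ 2) := by
    intro x hx
    have hne : x ≠ z := fun h => hz (h ▸ hx)
    have hset : insert z (X.erase x) = S.erase x := by
      rw [hS, Finset.erase_insert_of_ne hne.symm]
    rw [hset, inertia_erase S x (Finset.mem_insert_of_mem hx), sum_dist_sq S hSne x]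
  intro x hx
  rw [key xj hxj, key x hx]
  have hle : ‖x - cm S‖ ≤ ‖xj - cm S‖ := by rw [hcm]; exact hmax x hx
  have hsq : ‖x - cm S‖ ^ 2 ≤ ‖xj - cm S‖ ^ 2 :=
    pow_le_pow_left₀ (norm_nonneg _) hle 2
  have hc0 : (0 : ℝ) ≤ (S.card : ℝ) := Nat.cast_nonneg _
  nlinarith [mul_le_mul_of_nonneg_left hsq hc0]
end
end

section
/- Let B ⊆ ℝ^d be a convex body and let X be a set of M ≥ 2 distinct points of B. Then Keep(X;B) ⊆ B ∩ B( μ(X) , ((M+1)/(M−1))·A(X) ), where B(c,ρ) denotes the open Euclidean ball of radius ρ centered at c. -/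
open Finset Metric MeasureTheory
open scoped BigOperators ENNReal RealInnerProductSpace

noncomputable section

/-- Lemma 4 of the paper: `Keep(X;B) ⊆ B ∩ B(μ(X), ((M+1)/(M-1))·A(X))`. -/
theorem stmt_4 (d : ℕ) (B : Set (E d))
    (hBconv : Convex ℝ B) (hBcl : IsClosed B) (hBint : (interior B).Nonempty)
    (X : Finset (E d)) (hX : 2 ≤ X.card) (hXB : ↑X ⊆ B) :
    Keep X B ⊆ B ∩
      Metric.ball (cm X) ((((X.card : ℝ) + 1) / ((X.card : ℝ) - 1)) * Amax X) := by
  intro x hx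
  obtain ⟨hxB, hlt⟩ := hx
  refine ⟨hxB, ?_⟩
  rw [Metric.mem_ball, dist_eq_norm]
  set m : ℝ := (X.card : ℝ) with hm_def
  have hm : (2 : ℝ) ≤ m := by rw [hm_def]; exact_mod_cast hX
  have hXne : (X : Set (E d)).Nonempty := by
    obtain ⟨w, hw⟩ := Finset.card_pos.mp (by omega : 0 < X.card)
    exact ⟨w, hw⟩
  have hbdd : ∀ c : E d, BddAbove ((fun s => ‖s - c‖) '' (X : Set (E d))) := fun c =>
    (X.finite_toSet.image _).bddAbove
  have hAmem : ∀ w ∈ X, ‖w - cm X‖ ≤ Amax X := fun w hw =>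
    le_csSup (hbdd _) ⟨w, hw, rfl⟩
  have hA0 : 0 ≤ Amax X := by
    obtain ⟨w, hw⟩ := hXne
    exact le_trans (norm_nonneg _) (hAmem w hw)
  by_cases hxX : x ∈ X
  · rw [Finset.insert_eq_self.mpr hxX] at hlt
    have h1 : Amax X ≤ ((m + 1) / (m - 1)) * Amax X :=
      le_mul_of_one_le_left hA0 ((one_le_div (by linarith)).mpr (by linarith))
    calc ‖x - cm X‖ < Amax X := hlt
      _ ≤ _ := h1
  · -- x ∉ X
    have hcard : ((insert x X).card : ℝ) = m + 1 := by
      rw [Finset.card_insert_of_notMem hxX]; push_cast; ring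
    have hSig : csum X = m • cm X := by
      rw [cm, smul_smul, mul_inv_cancel₀ (by positivity : m ≠ 0), one_smul]
    have hμ' : cm (insert x X) = (m + 1)⁻¹ • (x + m • cm X) := by
      rw [cm, hcard, csum, Finset.sum_insert hxX, ← csum, hSig]
    have hm1 : m + 1 ≠ 0 := by positivity
    have h1 : x - cm (insert x X) = (m / (m + 1)) • (x - cm X) := by
      rw [hμ']; match_scalars <;> field_simp <;> ring
    have h2 : cm X - cm (insert x X) = ((m + 1)⁻¹) • (cm X - x) := by
      rw [hμ']; match_scalars <;> field_simp <;> ring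
    set t : ℝ := ‖x - cm X‖ with ht_def
    have ht0 : 0 ≤ t := norm_nonneg _
    have hn1 : ‖x - cm (insert x X)‖ = (m / (m + 1)) * t := by
      rw [h1, norm_smul, Real.norm_eq_abs, abs_of_pos (by positivity)]
    have hn2 : ‖cm X - cm (insert x X)‖ = (m + 1)⁻¹ * t := by
      rw [h2, norm_smul, Real.norm_eq_abs, abs_of_pos (by positivity),
        norm_sub_rev]
    have hsup : sSup ((fun s => ‖s - cm (insert x X)‖) '' (X : Set (E d)))
        ≤ Amax X + (m + 1)⁻¹ * t := by
      apply Real.sSup_le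
      · rintro r ⟨s, hs, rfl⟩
        calc ‖s - cm (insert x X)‖
            ≤ ‖s - cm X‖ + ‖cm X - cm (insert x X)‖ := by
              simpa using norm_sub_le_norm_sub_add_norm_sub s (cm X) (cm (insert x X))
          _ ≤ Amax X + (m + 1)⁻¹ * t := by rw [hn2]; exact add_le_add_left (hAmem s hs) _
      · positivity
    have key : (m / (m + 1)) * t < Amax X + (m + 1)⁻¹ * t := by
      rw [← hn1]; exact lt_of_lt_of_le hlt hsup
    rw [div_mul_eq_mul_div, lt_div_iff₀ (by linarith : (0:ℝ) < m - 1)]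
    have hmp : (0:ℝ) < m + 1 := by linarith
    have key2 : m * t < (m + 1) * Amax X + t := by
      have h := mul_lt_mul_of_pos_right key hmp
      field_simp at h
      nlinarith [h]
    linarith
end
end

section
/- Let B ⊆ ℝ^d be a convex body and let X be a set of M ≥ 2 distinct points of B. Then B ∩ B( μ(X) , A(X) ) ⊆ Keep(X;B), where B(c,ρ) denotes the open Euclidean ball of radius ρ centered at c. -/
open Finset Metric MeasureTheory
open scoped BigOperators ENNReal RealInnerProductSpace

noncomputable section

/-- Lemma 5 of the paper: `B ∩ B(μ(X), A(X)) ⊆ Keep(X;B)`. -/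
theorem stmt_5 (d : ℕ) (B : Set (E d))
    (hBconv : Convex ℝ B) (hBcl : IsClosed B) (hBint : (interior B).Nonempty)
    (X : Finset (E d)) (hX : 2 ≤ X.card) (hXB : ↑X ⊆ B) :
    B ∩ Metric.ball (cm X) (Amax X) ⊆ Keep X B := by
  rintro x ⟨hxB, hxball⟩
  rw [Metric.mem_ball, dist_eq_norm] at hxball
  have hXne : X.Nonempty := Finset.card_pos.mp (by omega)
  by_cases hx : x ∈ X
  · refine ⟨hxB, ?_⟩
    rw [Finset.insert_eq_self.mpr hx]
    exact hxball
  · have hn : (0:ℝ) < (X.card : ℝ) := by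
      have : 0 < X.card := by omega
      exact_mod_cast this
    set n : ℝ := (X.card : ℝ) with hndef
    have hne1 : n + 1 ≠ 0 := by positivity
    have hn1 : (0:ℝ) < n + 1 := by positivity
    set c := cm X with hc
    set m := cm (insert x X) with hm
    have hμ' : m = (n+1)⁻¹ • (x + csum X) := by
      rw [hm]
      unfold cm csum
      rw [Finset.card_insert_of_notMem hx, Finset.sum_insert hx]
      push_cast
      rfl
    have hcsum : csum X = n • c := by
      rw [hc]
      unfold cm
      rw [smul_smul, mul_inv_cancel₀ (ne_of_gt hn), one_smul]
    have key1 : (n+1) • (x - m) = n • (x - c) := by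
      rw [hμ', hcsum, smul_sub, smul_inv_smul₀ hne1]
      module
    have key2 : (n+1) • (m - c) = x - c := by
      rw [hμ', hcsum, smul_sub, smul_inv_smul₀ hne1]
      module
    have hnorm1 : (n+1) * ‖x - m‖ = n * ‖x - c‖ := by
      have := congrArg norm key1
      rwa [norm_smul, norm_smul, Real.norm_eq_abs, Real.norm_eq_abs,
        abs_of_pos hn1, abs_of_pos hn] at this
    have hnorm2 : (n+1) * ‖m - c‖ = ‖x - c‖ := by
      have := congrArg norm key2
      rwa [norm_smul, Real.norm_eq_abs, abs_of_pos hn1] at this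
    have himne : ((fun w => ‖w - c‖) '' (X : Set (E d))).Nonempty :=
      (hXne.to_set).image _
    have hAmem : Amax X ∈ ((fun w => ‖w - c‖) '' (X : Set (E d))) := by
      have hfin : ((fun w => ‖w - c‖) '' (X : Set (E d))).Finite :=
        (X.finite_toSet).image _
      exact himne.csSup_mem hfin
    obtain ⟨w, hwX, hwA⟩ := hAmem
    have tri : ‖w - c‖ ≤ ‖w - m‖ + ‖m - c‖ := by
      have := norm_add_le (w - m) (m - c)
      simpa using this
    have hlt : ‖x - m‖ < ‖w - m‖ := by
      replace hwA : ‖w - c‖ = Amax X := hwA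
      rw [hwA] at tri
      nlinarith [mul_pos hn1 (sub_pos.mpr hxball), norm_nonneg (x - c)]
    refine ⟨hxB, lt_of_lt_of_le hlt ?_⟩
    have hbdd : BddAbove ((fun s => ‖s - m‖) '' (X : Set (E d))) :=
      ((X.finite_toSet).image _).bddAbove
    exact le_csSup hbdd ⟨w, hwX, rfl⟩
end
end

section
/- Let B ⊆ ℝ^d be a convex body and let X be a set of M ≥ 2 distinct points of B. Then λ( { z ∈ Keep(X;B) : there exists x ∈ X with F({z} ∪ (X \ {x})) < (1 − 1/(4M))·F(X) } ) ≥ 4^{−d} · λ( Keep(X;B) ). -/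
open Finset Metric MeasureTheory
open scoped BigOperators ENNReal RealInnerProductSpace

noncomputable section

lemma inertia_eq_sum {d : ℕ} (X : Finset (E d)) (p : E d) :
    inertia X = (X.card : ℝ) * (∑ x ∈ X, ‖x - p‖ ^ 2)
      - ‖csum X - (X.card : ℝ) • p‖ ^ 2 := by
  have hsum : ∑ x ∈ X, (x - p) = csum X - (X.card : ℝ) • p := by
    rw [Finset.sum_sub_distrib, Finset.sum_const, csum, ← Nat.cast_smul_eq_nsmul ℝ]
  have hinner : ∑ x ∈ X, ∑ y ∈ X, ⟪x - p, y - p⟫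
      = ‖csum X - (X.card : ℝ) • p‖ ^ 2 := by
    rw [← real_inner_self_eq_norm_sq, ← hsum, sum_inner]
    exact Finset.sum_congr rfl fun x _ => (inner_sum _ _ _).symm
  have key : ∑ x ∈ X, ∑ y ∈ X, ‖x - y‖ ^ 2
      = 2 * ((X.card : ℝ) * (∑ x ∈ X, ‖x - p‖ ^ 2))
        - 2 * ∑ x ∈ X, ∑ y ∈ X, ⟪x - p, y - p⟫ := by
    have step : ∀ x y : E d, ‖x - y‖ ^ 2
        = ‖x - p‖ ^ 2 + ‖y - p‖ ^ 2 - 2 * ⟪x - p, y - p⟫ := by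
      intro x y
      have h : x - y = (x - p) - (y - p) := by abel
      rw [h, norm_sub_sq_real]; ring
    calc ∑ x ∈ X, ∑ y ∈ X, ‖x - y‖ ^ 2
        = ∑ x ∈ X, ∑ y ∈ X, (‖x - p‖ ^ 2 + ‖y - p‖ ^ 2 - 2 * ⟪x - p, y - p⟫) :=
          Finset.sum_congr rfl fun x _ => Finset.sum_congr rfl fun y _ => step x y
      _ = ∑ x ∈ X, ((X.card : ℝ) * ‖x - p‖ ^ 2 + (∑ y ∈ X, ‖y - p‖ ^ 2)
            - 2 * ∑ y ∈ X, ⟪x - p, y - p⟫) := by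
          refine Finset.sum_congr rfl fun x _ => ?_
          rw [Finset.sum_sub_distrib, Finset.sum_add_distrib, Finset.sum_const,
            ← Finset.mul_sum, nsmul_eq_mul]
      _ = _ := by
          rw [Finset.sum_sub_distrib, Finset.sum_add_distrib, Finset.sum_const,
            ← Finset.mul_sum, ← Finset.mul_sum, nsmul_eq_mul]
          ring
  rw [inertia, key, hinner]; ring

lemma inertia_le_sum {d : ℕ} (X : Finset (E d)) (p : E d) :
    inertia X ≤ (X.card : ℝ) * (∑ x ∈ X, ‖x - p‖ ^ 2) := by
  rw [inertia_eq_sum X p]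
  nlinarith [sq_nonneg ‖csum X - (X.card : ℝ) • p‖]

lemma csum_eq_card_smul_cm {d : ℕ} (X : Finset (E d)) (hX : X.Nonempty) :
    csum X = (X.card : ℝ) • cm X := by
  rw [cm, smul_smul, mul_inv_cancel₀ (by exact_mod_cast hX.card_pos.ne'), one_smul]

lemma inertia_cm {d : ℕ} (X : Finset (E d)) (hX : X.Nonempty) :
    inertia X = (X.card : ℝ) * (∑ x ∈ X, ‖x - cm X‖ ^ 2) := by
  rw [inertia_eq_sum X (cm X), ← csum_eq_card_smul_cm X hX]
  simp

lemma cm_insert_sub {d : ℕ} (X : Finset (E d)) (hX : X.Nonempty) (z : E d) (hz : z ∉ X) :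
    cm (insert z X) - cm X = ((X.card : ℝ) + 1)⁻¹ • (z - cm X) ∧
    z - cm (insert z X) = ((X.card : ℝ) / ((X.card : ℝ) + 1)) • (z - cm X) := by
  have hn1 : ((X.card : ℝ) + 1) ≠ 0 := by positivity
  have hc : cm (insert z X) = ((X.card : ℝ) + 1)⁻¹ • (z + (X.card : ℝ) • cm X) := by
    rw [cm, csum, Finset.sum_insert hz, Finset.card_insert_of_notMem hz,
      ← csum, csum_eq_card_smul_cm X hX]
    push_cast
    ring_nf
  constructor <;> rw [hc] <;> match_scalars <;> field_simp <;> ring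

set_option maxHeartbeats 2000000 in
/-- The set of points of `Keep(X;B)` whose arrival can decrease the moment of
inertia by a factor `1 - 1/(4M)` occupies at least a fraction `4^{-d}`
of `Keep(X;B)`. -/
theorem stmt_9 (d : ℕ) (B : Set (E d))
    (hBconv : Convex ℝ B) (hBcl : IsClosed B) (hBint : (interior B).Nonempty)
    (X : Finset (E d)) (hX : 2 ≤ X.card) (hXB : ↑X ⊆ B) :
    ((4 : ℝ≥0∞) ^ d)⁻¹ * volume (Keep X B) ≤
      volume {z ∈ Keep X B | ∃ x ∈ X,
        inertia (insert z (X.erase x)) <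
          (1 - 1 / (4 * (X.card : ℝ))) * inertia X} := by
  classical
  have hXne : X.Nonempty := Finset.card_pos.mp (by omega)
  set μ := cm X with hμdef
  clear_value μ
  obtain ⟨x', hx'X, hx'⟩ := X.exists_mem_eq_sup' hXne (fun w => ‖w - μ‖)
  set A := ‖x' - μ‖ with hAdef
  clear_value A
  have hAle : ∀ s ∈ X, ‖s - μ‖ ≤ A := fun s hs => by
    have := Finset.le_sup' (fun w => ‖w - μ‖) hs
    rw [hx'] at this; exact this
  obtain ⟨a, haX, b, hbX, hab⟩ := Finset.one_lt_card.mp hX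
  have hA0 : 0 < A := by
    have h1 : ‖a - b‖ ≤ ‖a - μ‖ + ‖b - μ‖ := by
      have h : a - b = (a - μ) - (b - μ) := by abel
      rw [h]; exact norm_sub_le _ _
    have h2 : 0 < ‖a - b‖ := by rwa [norm_pos_iff, sub_ne_zero]
    have := hAle a haX; have := hAle b hbX; linarith
  set nn := (X.card : ℝ) with hnn
  clear_value nn
  have hn2 : (2:ℝ) ≤ nn := by rw [hnn]; exact_mod_cast hX
  have hn0 : nn ≠ 0 := by linarith
  have hn1 : nn + 1 ≠ 0 := by linarith
  set u := (nn + 1)⁻¹ with hudef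
  have hu0 : 0 < u := by rw [hudef]; positivity
  have hru : nn * u + u = 1 := by rw [hudef]; field_simp
  clear_value u
  have hu3 : u ≤ 1/3 := by nlinarith
  set S := ∑ x ∈ X, ‖x - μ‖ ^ 2 with hSdef
  have hFS : inertia X = nn * S := by
    rw [hSdef, hnn, hμdef]; exact inertia_cm X hXne
  have hSA : S ≤ nn * A ^ 2 := by
    rw [hSdef, hnn]
    calc ∑ x ∈ X, ‖x - μ‖ ^ 2 ≤ ∑ _x ∈ X, A ^ 2 :=
          Finset.sum_le_sum fun i hi => by
            have := hAle i hi; nlinarith [norm_nonneg (i - μ)]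
      _ = (X.card : ℝ) * A ^ 2 := by rw [Finset.sum_const, nsmul_eq_mul]
  have hQ : ∑ y ∈ X.erase x', ‖y - μ‖ ^ 2 = S - A ^ 2 := by
    have h : ∑ y ∈ X.erase x', ‖y - μ‖ ^ 2 + ‖x' - μ‖ ^ 2 = ∑ y ∈ X, ‖y - μ‖ ^ 2 :=
      Finset.sum_erase_add X _ hx'X
    rw [hSdef, hAdef]; linarith [h]
  clear_value S
  have hFpos : 0 < inertia X := by
    have h1 : ‖a - b‖ ^ 2 ≤ ∑ y ∈ X, ‖a - y‖ ^ 2 :=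
      Finset.single_le_sum (f := fun y => ‖a - y‖ ^ 2) (fun i _ => sq_nonneg _) hbX
    have h2 : ∑ y ∈ X, ‖a - y‖ ^ 2 ≤ ∑ x ∈ X, ∑ y ∈ X, ‖x - y‖ ^ 2 :=
      Finset.single_le_sum (f := fun x => ∑ y ∈ X, ‖x - y‖ ^ 2)
        (fun i _ => Finset.sum_nonneg fun j _ => sq_nonneg _) haX
    have hab' : 0 < ‖a - b‖ := by rwa [norm_pos_iff, sub_ne_zero]
    rw [inertia]; nlinarith
  have hS0 : 0 < S := by nlinarith
  have hSA2 : 0 ≤ S - A ^ 2 := by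
    rw [← hQ]; exact Finset.sum_nonneg fun i _ => sq_nonneg _
  have hμB : μ ∈ B := by
    have hrepr : μ = ∑ x ∈ X, (nn)⁻¹ • x := by
      rw [hμdef, hnn, cm, csum, Finset.smul_sum]
    rw [hrepr]
    refine hBconv.sum_mem (fun i _ => by rw [hnn]; positivity) ?_ (fun i hi => hXB hi)
    rw [Finset.sum_const, nsmul_eq_mul, ← hnn]
    field_simp
  -- distance bound for points of Keep
  have keep_dist : ∀ z ∈ Keep X B, ‖z - μ‖ < 3 * A := by
    intro z hz
    obtain ⟨hzB, hzlt⟩ := hz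
    rw [← Finset.sup'_eq_csSup_image X hXne] at hzlt
    by_cases hzX : z ∈ X
    · rw [Finset.insert_eq_self.mpr hzX, ← hμdef] at hzlt
      have hle : X.sup' hXne (fun s => ‖s - μ‖) ≤ A := Finset.sup'_le _ _ hAle
      have : ‖z - μ‖ < A := lt_of_lt_of_le hzlt hle
      linarith
    · obtain ⟨hc1, hc2⟩ := cm_insert_sub X hXne z hzX
      rw [← hμdef, ← hnn, ← hudef] at hc1
      rw [← hμdef, ← hnn, div_eq_mul_inv, ← hudef] at hc2
      have hLHS : ‖z - cm (insert z X)‖ = nn * u * ‖z - μ‖ := by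
        rw [hc2, norm_smul, Real.norm_eq_abs,
          abs_of_nonneg (mul_nonneg (by linarith) hu0.le)]
      have hcm : ‖cm (insert z X) - μ‖ = u * ‖z - μ‖ := by
        rw [hc1, norm_smul, Real.norm_eq_abs, abs_of_nonneg hu0.le]
      have hRHS : X.sup' hXne (fun s => ‖s - cm (insert z X)‖)
          ≤ A + u * ‖z - μ‖ := by
        refine Finset.sup'_le _ _ fun s hs => ?_
        have h : s - cm (insert z X) = (s - μ) + (μ - cm (insert z X)) := by abel
        calc ‖s - cm (insert z X)‖ ≤ ‖s - μ‖ + ‖μ - cm (insert z X)‖ := by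
              rw [h]; exact norm_add_le _ _
          _ ≤ A + u * ‖z - μ‖ := by
              rw [norm_sub_rev μ (cm (insert z X)), hcm]
              exact add_le_add_left (hAle s hs) _
      rw [hLHS] at hzlt
      have hzlt2 : nn * u * ‖z - μ‖ < A + u * ‖z - μ‖ := lt_of_lt_of_le hzlt hRHS
      have ht0 : (0:ℝ) ≤ ‖z - μ‖ := norm_nonneg _
      have e1 : (nn * u + u) * ‖z - μ‖ = ‖z - μ‖ := by rw [hru, one_mul]
      have e2 : u * ‖z - μ‖ ≤ (1/3) * ‖z - μ‖ := mul_le_mul_of_nonneg_right hu3 ht0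
      clear hzlt hc1 hc2 hRHS hLHS hcm
      linarith [e1, e2, hzlt2, ht0, hA0]
  -- the inclusion of the shrunk Keep set into the good set
  have hincl : (AffineMap.homothety μ (4⁻¹:ℝ)) '' (Keep X B) ⊆
      {z ∈ Keep X B | ∃ x ∈ X,
        inertia (insert z (X.erase x)) < (1 - 1 / (4 * nn)) * inertia X} := by
    rintro _ ⟨z, hz, rfl⟩
    have hzB : z ∈ B := hz.1
    set w := AffineMap.homothety μ (4⁻¹:ℝ) z with hwdef
    have hwμ : w - μ = (4⁻¹:ℝ) • (z - μ) := by
      rw [hwdef, AffineMap.homothety_apply]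
      simp [vsub_eq_sub, vadd_eq_add]
    clear_value w
    have hwn : ‖w - μ‖ = 4⁻¹ * ‖z - μ‖ := by
      rw [hwμ, norm_smul, Real.norm_eq_abs, abs_of_nonneg (by norm_num)]
    have hzA := keep_dist z hz
    have hwlt : ‖w - μ‖ < (3/4) * A := by rw [hwn]; linarith
    have hwA : ‖w - μ‖ < A := by linarith
    have hwne : w ≠ x' := by
      intro h
      rw [h] at hwA
      rw [← hAdef] at hwA
      exact lt_irrefl _ hwA
    have hwB : w ∈ B := by
      have hmem := hBconv hμB hzB (by norm_num : (0:ℝ) ≤ 3/4)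
        (by norm_num : (0:ℝ) ≤ 4⁻¹) (by norm_num)
      have heq : (3/4:ℝ) • μ + (4⁻¹:ℝ) • z = w := by
        have h4 : w = (4⁻¹:ℝ) • (z - μ) + μ := by
          linear_combination (norm := module) hwμ
        rw [h4]; module
      rwa [heq] at hmem
    have hs0 : (0:ℝ) ≤ ‖w - μ‖ := norm_nonneg _
    -- w is in Keep X B
    have hwKeep : w ∈ Keep X B := by
      refine ⟨hwB, ?_⟩
      rw [← Finset.sup'_eq_csSup_image X hXne]
      by_cases hwX : w ∈ X
      · rw [Finset.insert_eq_self.mpr hwX, ← hμdef]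
        have := Finset.le_sup' (fun s => ‖s - μ‖) hx'X
        have hxA : ‖x' - μ‖ = A := hAdef.symm
        calc ‖w - μ‖ < A := hwA
          _ = ‖x' - μ‖ := hAdef
          _ ≤ _ := this
      · obtain ⟨hc1, hc2⟩ := cm_insert_sub X hXne w hwX
        rw [← hμdef, ← hnn, ← hudef] at hc1
        rw [← hμdef, ← hnn, div_eq_mul_inv, ← hudef] at hc2
        have hLHS : ‖w - cm (insert w X)‖ = nn * u * ‖w - μ‖ := by
          rw [hc2, norm_smul, Real.norm_eq_abs,
            abs_of_nonneg (mul_nonneg (by linarith) hu0.le)]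
        have hcm : ‖cm (insert w X) - μ‖ = u * ‖w - μ‖ := by
          rw [hc1, norm_smul, Real.norm_eq_abs, abs_of_nonneg hu0.le]
        have hRHS : A - u * ‖w - μ‖ ≤ X.sup' hXne (fun s => ‖s - cm (insert w X)‖) := by
          have h1 : ‖x' - μ‖ - ‖cm (insert w X) - μ‖ ≤ ‖x' - cm (insert w X)‖ := by
            have h : (x' - μ) - (cm (insert w X) - μ) = x' - cm (insert w X) := by abel
            calc ‖x' - μ‖ - ‖cm (insert w X) - μ‖
                ≤ ‖(x' - μ) - (cm (insert w X) - μ)‖ := norm_sub_norm_le _ _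
              _ = ‖x' - cm (insert w X)‖ := by rw [h]
          have h2 := Finset.le_sup' (fun s => ‖s - cm (insert w X)‖) hx'X
          rw [hcm, ← hAdef] at h1
          calc A - u * ‖w - μ‖ ≤ ‖x' - cm (insert w X)‖ := by linarith
            _ ≤ _ := h2
        rw [hLHS]
        have hmono : nn * u * ‖w - μ‖ < A - u * ‖w - μ‖ := by
          have hprod : (nn * u + u) * ‖w - μ‖ = ‖w - μ‖ := by rw [hru, one_mul]
          nlinarith [hprod]
        exact lt_of_lt_of_le hmono hRHS
    refine ⟨hwKeep, x', hx'X, ?_⟩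
    -- the inertia decrease
    by_cases hwX : w ∈ X
    · -- degenerate case : w already belongs to X (and w ≠ x')
      have hwer : w ∈ X.erase x' := Finset.mem_erase.mpr ⟨hwne, hwX⟩
      rw [Finset.insert_eq_self.mpr hwer]
      have hcard : ((X.erase x').card : ℝ) = nn - 1 := by
        rw [Finset.card_erase_of_mem hx'X, hnn]
        have h1 : 1 ≤ X.card := by omega
        push_cast [Nat.cast_sub h1]; ring
      have hle := inertia_le_sum (X.erase x') μ
      rw [hcard, hQ] at hle
      rw [hFS]
      have hinv : (1 - 1 / (4 * nn)) * (nn * S) = nn * S - S / 4 := by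
        field_simp
      rw [hinv]
      nlinarith [mul_nonneg (by linarith : (0:ℝ) ≤ nn - 1) (sq_nonneg A)]
    · -- generic case : w is a new point
      have hwer : w ∉ X.erase x' := fun h => hwX (Finset.mem_of_mem_erase h)
      have hcard : (((insert w (X.erase x')).card) : ℝ) = nn := by
        rw [Finset.card_insert_of_notMem hwer, Finset.card_erase_of_mem hx'X, hnn]
        have h1 : X.card - 1 + 1 = X.card := by omega
        rw [h1]
      have hsum : ∑ y ∈ insert w (X.erase x'), ‖y - μ‖ ^ 2
          = ‖w - μ‖ ^ 2 + (S - A ^ 2) := by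
        rw [Finset.sum_insert hwer, hQ]
      have hle := inertia_le_sum (insert w (X.erase x')) μ
      rw [hcard, hsum] at hle
      rw [hFS]
      have hinv : (1 - 1 / (4 * nn)) * (nn * S) = nn * S - S / 4 := by
        field_simp
      rw [hinv]
      have hs2 : ‖w - μ‖ ^ 2 < (9/16) * A ^ 2 := by nlinarith
      have h3 : nn * ‖w - μ‖ ^ 2 < (9/16) * (nn * A ^ 2) := by nlinarith
      nlinarith [hSA, hS0, hle, h3]
  -- conclude via the measure of the homothety image
  have hmeas : volume ((AffineMap.homothety μ (4⁻¹:ℝ)) '' (Keep X B))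
      = ((4 : ℝ≥0∞) ^ d)⁻¹ * volume (Keep X B) := by
    rw [Measure.addHaar_image_homothety]
    congr 1
    rw [show Module.finrank ℝ (E d) = d from finrank_euclideanSpace_fin, abs_of_nonneg (by positivity : (0:ℝ) ≤ (4⁻¹:ℝ) ^ d),
      ENNReal.ofReal_pow (by norm_num), ENNReal.ofReal_inv_of_pos (by norm_num),
      ENNReal.inv_pow]
    norm_num
  calc ((4 : ℝ≥0∞) ^ d)⁻¹ * volume (Keep X B)
      = volume ((AffineMap.homothety μ (4⁻¹:ℝ)) '' (Keep X B)) := hmeas.symm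
    _ ≤ _ := measure_mono hincl
end
end

section
/- Let d ≥ 1, let 0 < r < R, let B ⊆ ℝ^d be a convex body, and let y ∈ ℝ^d. Then λ( B(y,R) ∩ B ∩ N_r(B^c) ) ≤ 2·r·d·√d·V(d−1)·R^{d−1}, where V(d−1) is the Lebesgue measure of the unit ball in ℝ^{d−1}, with the convention V(0) = 1. -/
open Finset Metric MeasureTheory
open scoped BigOperators ENNReal RealInnerProductSpace

noncomputable section

namespace Stmt10Aux

-- Lemma A
lemma shiftvol {I : Set ℝ} (hI : Convex ℝ I) (c : ℝ) :
    volume {t | t ∈ I ∧ t + c ∉ I} ≤ ENNReal.ofReal |c| := by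
  refine (Real.volume_le_diam _).trans (EMetric.diam_le ?_)
  have key : ∀ a b : ℝ, a ∈ I → a + c ∉ I → b ∈ I → b + c ∉ I → b ≤ a → a - b ≤ |c| := by
    intro a b ha hac hb hbc hba
    by_contra h
    push_neg at h
    rcases le_or_gt 0 c with hc | hc
    · exact hbc (hI.ordConnected.out hb ha
        ⟨by linarith [abs_of_nonneg hc], by linarith [abs_of_nonneg hc]⟩)
    · exact hac (hI.ordConnected.out hb ha
        ⟨by linarith [abs_of_neg hc], by linarith [abs_of_neg hc]⟩)
  intro t1 ht1 t2 ht2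
  rw [edist_dist, Real.dist_eq]
  refine ENNReal.ofReal_le_ofReal ?_
  rcases le_total t1 t2 with h | h
  · have := key t2 t1 ht2.1 ht2.2 ht1.1 ht1.2 h
    rw [abs_sub_comm]; rwa [abs_of_nonneg (by linarith)]
  · have := key t1 t2 ht1.1 ht1.2 ht2.1 ht2.2 h
    rwa [abs_of_nonneg (by linarith)]

lemma ubVol_zero : ubVol 0 = 1 := by
  rw [ubVol, volume_euclideanSpace_eq_dirac,
    Measure.dirac_apply_of_mem (by simp : (0 : EuclideanSpace ℝ (Fin 0)) ∈ Metric.ball 0 1)]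
  simp

-- Lemma C
lemma vol_ball_le (ι : Type) [Fintype ι] (k : ℕ) (hcard : Fintype.card ι = k)
    (y : EuclideanSpace ℝ ι) (R : ℝ) (hR : 0 ≤ R) :
    volume (Metric.ball y R) ≤ ENNReal.ofReal (ubVol k * R ^ k) := by
  rcases isEmpty_or_nonempty ι with hι | hι
  · have hk : k = 0 := by simpa [Fintype.card_eq_zero] using hcard.symm
    subst hk
    have h1 : (volume : Measure (EuclideanSpace ℝ ι)) (Metric.ball y R) ≤ 1 := by
      rw [volume_euclideanSpace_eq_dirac]
      exact (measure_mono (Set.subset_univ _)).trans_eq measure_univ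
    simpa [ubVol_zero] using h1
  · have hk : 1 ≤ k := by rw [← hcard]; exact Fintype.card_pos
    haveI : Nonempty (Fin k) := ⟨⟨0, hk⟩⟩
    have h1 := EuclideanSpace.volume_ball ι y R
    have h2 := EuclideanSpace.volume_ball (Fin k) 0 1
    rw [Fintype.card_fin] at h2
    rw [hcard] at h1
    have hC : 0 ≤ Real.sqrt Real.pi ^ k / Real.Gamma (k / 2 + 1) :=
      div_nonneg (pow_nonneg (Real.sqrt_nonneg _) _) (Real.Gamma_pos_of_pos (by positivity)).le
    have hub : ubVol k = Real.sqrt Real.pi ^ k / Real.Gamma (k / 2 + 1) := by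
      rw [ubVol, h2]
      simp [ENNReal.toReal_ofReal hC]
    rw [h1, hub, ← ENNReal.ofReal_pow hR, ← ENNReal.ofReal_mul (pow_nonneg hR _)]
    exact le_of_eq (by rw [mul_comm])

lemma ubVol_nonneg (k : ℕ) : 0 ≤ ubVol k := ENNReal.toReal_nonneg

lemma slice_bound (d : ℕ) (i : Fin d) (c R : ℝ) (hR : 0 ≤ R)
    (B : Set (E d)) (hBconv : Convex ℝ B) (hBcl : IsClosed B) (y : E d)
    (hvb : ∀ (ι : Type) [Fintype ι], Fintype.card ι = d - 1 → ∀ (y' : EuclideanSpace ℝ ι),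
      volume (Metric.ball y' R) ≤ ENNReal.ofReal (ubVol (d-1) * R ^ (d-1)))
    (hshift : ∀ (I : Set ℝ), Convex ℝ I →
      volume {t | t ∈ I ∧ t + c ∉ I} ≤ ENNReal.ofReal |c|) :
    volume {x : E d | x ∈ Metric.ball y R ∧ x ∈ B ∧
        x + c • (EuclideanSpace.single i 1 : E d) ∉ B} ≤
      ENNReal.ofReal |c| * ENNReal.ofReal (ubVol (d - 1) * R ^ (d - 1)) := by
  classical
  set w : E d := EuclideanSpace.single i 1 with hw
  set p : Fin d → Prop := fun j => ¬ (j = i) with hp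
  haveI uniq : Unique {j // ¬ p j} :=
    ⟨⟨⟨i, by simp [hp]⟩⟩, fun a => Subtype.ext (by simpa [hp] using a.2)⟩
  have hcard : Fintype.card {j // p j} = d - 1 := by
    have h1 : Fintype.card {j : Fin d // j = i} = 1 := Fintype.card_subtype_eq i
    have := Fintype.card_subtype_compl (fun j : Fin d => j = i)
    rw [h1, Fintype.card_fin] at this
    exact this
  set A : Set (E d) := {x | x ∈ Metric.ball y R ∧ x ∈ B ∧ x + c • w ∉ B} with hA
  have hBmeas : MeasurableSet B := hBcl.measurableSet
  have hAmeas : MeasurableSet A := by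
    have h3 : MeasurableSet {x : E d | x + c • w ∉ B} :=
      hBmeas.compl.preimage (by fun_prop : Measurable fun x : E d => x + c • w)
    exact measurableSet_ball.inter (hBmeas.inter h3)
  set e : E d ≃ᵐ ((∀ _ : {j // p j}, ℝ) × (∀ _ : {j // ¬ p j}, ℝ)) :=
    ((MeasurableEquiv.toLp 2 (Fin d → ℝ)).symm).trans
      (MeasurableEquiv.piEquivPiSubtypeProd (fun _ : Fin d => ℝ) p) with he
  have hmp : MeasurePreserving e volume
      ((Measure.pi fun _ : {j // p j} => (volume : Measure ℝ)).prod
        (Measure.pi fun _ : {j // ¬ p j} => (volume : Measure ℝ))) :=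
    (measurePreserving_piEquivPiSubtypeProd (fun _ : Fin d => (volume : Measure ℝ)) p).comp
      (EuclideanSpace.volume_preserving_symm_measurableEquiv_toLp (Fin d))
  have hA' : MeasurableSet ((e.symm) ⁻¹' A) := e.symm.measurable hAmeas
  have hvol : volume A =
      ((Measure.pi fun _ : {j // p j} => (volume : Measure ℝ)).prod
        (Measure.pi fun _ : {j // ¬ p j} => (volume : Measure ℝ))) (e.symm ⁻¹' A) := by
    have h := hmp.measure_preimage hA'.nullMeasurableSet
    rwa [show e ⁻¹' (e.symm ⁻¹' A) = A by ext x; simp] at h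
  rw [hvol, Measure.prod_apply hA']
  set P : (∀ _ : {j // p j}, ℝ) → ℝ → E d := fun x' t => e.symm (x', fun _ => t) with hP
  have hPcoord : ∀ x' t (j : Fin d), P x' t j = if h : p j then x' ⟨j, h⟩ else t := by
    intro x' t j; rfl
  have hPadd : ∀ x' t, P x' t + c • w = P x' (t + c) := by
    intro x' t
    ext j
    have hco : (P x' t + c • w) j = P x' t j + c * w j := rfl
    rw [hco, hPcoord, hPcoord, hw]
    by_cases h : p j
    · rw [dif_pos h, dif_pos h, EuclideanSpace.single_apply, if_neg (fun hh => h hh), mul_zero,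
        add_zero]
    · rw [dif_neg h, dif_neg h, EuclideanSpace.single_apply, if_pos (not_not.mp h), mul_one]
  have hIconv : ∀ x', Convex ℝ {t : ℝ | P x' t ∈ B} := by
    intro x' t1 ht1 t2 ht2 a b ha hb hab
    have h := hBconv ht1 ht2 ha hb hab
    show P x' (a • t1 + b • t2) ∈ B
    convert h using 2
    ext j
    have hco : (a • P x' t1 + b • P x' t2) j = a * P x' t1 j + b * P x' t2 j := rfl
    rw [hco, hPcoord, hPcoord, hPcoord]
    by_cases hj : p j
    · rw [dif_pos hj, dif_pos hj, dif_pos hj, ← add_mul, hab, one_mul]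
    · rw [dif_neg hj, dif_neg hj, dif_neg hj]; rfl
  have hμ₂slice : ∀ x', (Measure.pi fun _ : {j // ¬ p j} => (volume : Measure ℝ))
      (Prod.mk x' ⁻¹' (e.symm ⁻¹' A)) = volume {t : ℝ | P x' t ∈ A} := by
    intro x'
    have hU := (measurePreserving_funUnique (volume : Measure ℝ) {j // ¬ p j}).symm
    have hm : MeasurableSet (Prod.mk x' ⁻¹' (e.symm ⁻¹' A)) := measurable_prodMk_left hA'
    have h2 := (hU.measure_preimage hm.nullMeasurableSet).symm
    convert h2 using 2
    congr!
    rfl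
  set y' : EuclideanSpace ℝ {j // p j} :=
    ((MeasurableEquiv.toLp 2 ({j // p j} → ℝ)).symm).symm (fun j => y j.1) with hy'
  set Bl : Set (∀ _ : {j // p j}, ℝ) :=
    (⇑((MeasurableEquiv.toLp 2 ({j // p j} → ℝ)).symm).symm) ⁻¹' (Metric.ball y' R) with hBl
  have hBlmeas : MeasurableSet Bl :=
    ((MeasurableEquiv.toLp 2 ({j // p j} → ℝ)).symm).symm.measurable measurableSet_ball
  have hμ₁Bl : (Measure.pi fun _ : {j // p j} => (volume : Measure ℝ)) Bl ≤
      ENNReal.ofReal (ubVol (d-1) * R ^ (d-1)) := by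
    have h := ((EuclideanSpace.volume_preserving_symm_measurableEquiv_toLp {j // p j}).symm).measure_preimage
      (measurableSet_ball (x := y') (ε := R)).nullMeasurableSet
    exact le_trans (le_of_eq h) (hvb _ hcard y')
  have hslice_empty : ∀ x', x' ∉ Bl → {t : ℝ | P x' t ∈ A} = ∅ := by
    intro x' hx'
    rw [Set.eq_empty_iff_forall_notMem]
    intro t ht
    apply hx'
    have hb : dist (P x' t) y < R := mem_ball.mp ht.1
    rw [hBl, Set.mem_preimage, mem_ball]
    have hle : dist (((MeasurableEquiv.toLp 2 ({j // p j} → ℝ)).symm).symm x') y' ≤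
        dist (P x' t) y := by
      rw [EuclideanSpace.dist_eq, EuclideanSpace.dist_eq]
      apply Real.sqrt_le_sqrt
      have hsum : ∑ j : {j // p j},
          dist ((((MeasurableEquiv.toLp 2 ({j // p j} → ℝ)).symm).symm x') j) (y' j) ^ 2
          = ∑ j ∈ Finset.univ.filter p, dist (P x' t j) (y j) ^ 2 := by
        rw [Finset.sum_subtype (p := p) (Finset.univ.filter p) (by simp)
          (fun j => dist (P x' t j) (y j) ^ 2)]
        exact Finset.sum_congr rfl (fun j _ => by rw [hPcoord, dif_pos j.2]; exact rfl)
      rw [hsum]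
      exact Finset.sum_le_sum_of_subset_of_nonneg (Finset.filter_subset _ _)
        (fun j _ _ => sq_nonneg _)
    linarith
  calc ∫⁻ x', (Measure.pi fun _ : {j // ¬ p j} => (volume : Measure ℝ))
        (Prod.mk x' ⁻¹' (e.symm ⁻¹' A)) ∂(Measure.pi fun _ : {j // p j} => (volume : Measure ℝ))
      ≤ ∫⁻ x', Bl.indicator (fun _ => ENNReal.ofReal |c|) x'
          ∂(Measure.pi fun _ : {j // p j} => (volume : Measure ℝ)) := by
        apply lintegral_mono
        intro x'
        dsimp only
        rw [hμ₂slice]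
        by_cases hx' : x' ∈ Bl
        · rw [Set.indicator_of_mem hx']
          refine le_trans (measure_mono ?_) (hshift {t | P x' t ∈ B} (hIconv x'))
          intro t ht
          refine ⟨ht.2.1, fun hmem => ht.2.2 ?_⟩
          have hPB : P x' (t + c) ∈ B := hmem
          rwa [← hPadd] at hPB
        · rw [Set.indicator_of_notMem hx', hslice_empty x' hx']
          simp
    _ = ENNReal.ofReal |c| * (Measure.pi fun _ : {j // p j} => (volume : Measure ℝ)) Bl :=
        lintegral_indicator_const hBlmeas _
    _ ≤ _ := mul_le_mul_right hμ₁Bl _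

lemma cover_lemma (d : ℕ) (hd : 1 ≤ d) (r : ℝ) (hr : 0 < r) (R : ℝ)
    (B : Set (E d)) (hBconv : Convex ℝ B) (hBcl : IsClosed B) (y : E d) :
    Metric.ball y R ∩ B ∩ Metric.thickening r Bᶜ ⊆
      ⋃ i : Fin d,
        ({x : E d | x ∈ Metric.ball y R ∧ x ∈ B ∧
            x + (r * Real.sqrt d) • (EuclideanSpace.single i 1 : E d) ∉ B} ∪
         {x : E d | x ∈ Metric.ball y R ∧ x ∈ B ∧
            x + (-(r * Real.sqrt d)) • (EuclideanSpace.single i 1 : E d) ∉ B}) := by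
  classical
  have hd0 : (0:ℝ) < d := by exact_mod_cast hd
  have hsd : 0 < Real.sqrt d := Real.sqrt_pos.mpr hd0
  rintro x ⟨⟨hxball, hxB⟩, hxth⟩
  obtain ⟨z, hzB, hzd⟩ := Metric.mem_thickening_iff.mp hxth
  obtain ⟨f, u, hfB, hfz⟩ := geometric_hahn_banach_closed_point hBconv hBcl hzB
  set v : E d := (InnerProductSpace.toDual ℝ (E d)).symm f with hv
  have hvf : ∀ w, ⟪v, w⟫ = f w := fun w => InnerProductSpace.toDual_symm_apply
  have hvne : v ≠ 0 := by
    intro h0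
    have h1 := hvf z
    have h2 := hvf x
    rw [h0, inner_zero_left] at h1 h2
    have := hfB x hxB
    linarith
  have hvnorm : 0 < ‖v‖ := norm_pos_iff.mpr hvne
  have hfx : u - r * ‖v‖ < f x := by
    have h1 : f z - f x = ⟪v, z - x⟫ := by rw [hvf, map_sub]
    have h2 : ⟪v, z - x⟫ ≤ ‖v‖ * ‖z - x‖ := real_inner_le_norm v (z - x)
    have h3 : ‖z - x‖ < r := by rw [← dist_eq_norm, dist_comm]; exact hzd
    nlinarith [hfB x hxB]
  have hsum : ∑ j : Fin d, (v j)^2 = ‖v‖^2 := by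
    rw [EuclideanSpace.norm_eq, Real.sq_sqrt (by positivity)]
    simp [Real.norm_eq_abs, sq_abs]
  haveI : Nonempty (Fin d) := ⟨⟨0, hd⟩⟩
  have hex : ∃ j ∈ (Finset.univ : Finset (Fin d)), ‖v‖^2 / d ≤ (v j)^2 := by
    apply Finset.exists_le_of_sum_le Finset.univ_nonempty
    rw [hsum, Finset.sum_const, Finset.card_univ, Fintype.card_fin, nsmul_eq_mul,
      mul_div_cancel₀ _ (ne_of_gt hd0)]
  obtain ⟨i, _, hi⟩ := hex
  have habs : ‖v‖ / Real.sqrt d ≤ |v i| := by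
    have h := Real.sqrt_le_sqrt hi
    rwa [Real.sqrt_div (sq_nonneg _), Real.sqrt_sq (norm_nonneg _), Real.sqrt_sq_eq_abs] at h
  set σ : ℝ := if 0 ≤ v i then 1 else -1 with hσ
  have hσv : σ * v i = |v i| := by
    by_cases h : 0 ≤ v i
    · simp [hσ, h, abs_of_nonneg h]
    · simp [hσ, h, abs_of_neg (lt_of_not_ge h)]
  have hfsingle : f (EuclideanSpace.single i 1) = v i := by
    rw [← hvf]
    have := EuclideanSpace.inner_single_right (𝕜 := ℝ) i 1 v
    simpa using this
  have hkey : u < f (x + (σ * (r * Real.sqrt d)) • EuclideanSpace.single i 1) := by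
    rw [map_add, _root_.map_smul, smul_eq_mul, hfsingle]
    have h1 : σ * (r * Real.sqrt d) * v i = (r * Real.sqrt d) * (σ * v i) := by ring
    rw [h1, hσv]
    have h2 : r * ‖v‖ ≤ r * Real.sqrt d * |v i| := by
      have := mul_le_mul_of_nonneg_left habs (le_of_lt (mul_pos hr hsd))
      calc r * ‖v‖ = r * Real.sqrt d * (‖v‖ / Real.sqrt d) := by field_simp
        _ ≤ r * Real.sqrt d * |v i| := this
    linarith
  have hout : x + (σ * (r * Real.sqrt d)) • (EuclideanSpace.single i 1 : E d) ∉ B :=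
    fun hmem => absurd (hfB _ hmem) (not_lt.mpr hkey.le)
  refine Set.mem_iUnion.mpr ⟨i, ?_⟩
  by_cases h : 0 ≤ v i
  · left
    refine ⟨hxball, hxB, ?_⟩
    have : σ * (r * Real.sqrt d) = r * Real.sqrt d := by rw [hσ, if_pos h, one_mul]
    rwa [this] at hout
  · right
    refine ⟨hxball, hxB, ?_⟩
    have : σ * (r * Real.sqrt d) = -(r * Real.sqrt d) := by rw [hσ, if_neg h]; ring
    rwa [this] at hout

end Stmt10Aux

/-- Lemma 9 of the paper (chocolate-egg isoperimetric inequality, easy version):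
the volume of the part of the inner `r`-shell of a convex body `B` inside a ball
of radius `R` is at most `2·r·d·√d·V(d-1)·R^{d-1}`. -/
theorem stmt_10 (d : ℕ) (hd : 1 ≤ d) (r R : ℝ) (hr : 0 < r) (hrR : r < R)
    (B : Set (E d))
    (hBconv : Convex ℝ B) (hBcl : IsClosed B) (hBint : (interior B).Nonempty)
    (y : E d) :
    volume (Metric.ball y R ∩ B ∩ Metric.thickening r Bᶜ) ≤
      ENNReal.ofReal
        (2 * r * (d : ℝ) * Real.sqrt d * ubVol (d - 1) * R ^ (d - 1)) := by
  classical
  have hd0 : (0:ℝ) < d := by exact_mod_cast hd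
  have hsd : 0 < Real.sqrt d := Real.sqrt_pos.mpr hd0
  have hR0 : 0 ≤ R := (hr.trans hrR).le
  have hvb : ∀ (ι : Type) [Fintype ι], Fintype.card ι = d - 1 →
      ∀ (y' : EuclideanSpace ℝ ι),
      volume (Metric.ball y' R) ≤ ENNReal.ofReal (ubVol (d-1) * R ^ (d-1)) := by
    intro ι _ hcard y'
    exact Stmt10Aux.vol_ball_le ι (d-1) hcard y' R hR0
  set b : ℝ≥0∞ :=
    ENNReal.ofReal (r * Real.sqrt d) * ENNReal.ofReal (ubVol (d-1) * R^(d-1)) with hb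
  have habs1 : |r * Real.sqrt d| = r * Real.sqrt d := abs_of_pos (by positivity)
  have habs2 : |(-(r * Real.sqrt d))| = r * Real.sqrt d := by rw [abs_neg, habs1]
  have hA : ∀ (i : Fin d) (c : ℝ),
      volume {x : E d | x ∈ Metric.ball y R ∧ x ∈ B ∧
        x + c • (EuclideanSpace.single i 1 : E d) ∉ B} ≤
      ENNReal.ofReal |c| * ENNReal.ofReal (ubVol (d-1) * R^(d-1)) := by
    intro i c
    exact Stmt10Aux.slice_bound d i c R hR0 B hBconv hBcl y hvb
      (fun I hI => Stmt10Aux.shiftvol hI c)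
  calc volume (Metric.ball y R ∩ B ∩ Metric.thickening r Bᶜ)
      ≤ volume (⋃ i : Fin d,
        ({x : E d | x ∈ Metric.ball y R ∧ x ∈ B ∧
            x + (r * Real.sqrt d) • (EuclideanSpace.single i 1 : E d) ∉ B} ∪
         {x : E d | x ∈ Metric.ball y R ∧ x ∈ B ∧
            x + (-(r * Real.sqrt d)) • (EuclideanSpace.single i 1 : E d) ∉ B})) :=
        measure_mono (Stmt10Aux.cover_lemma d hd r hr R B hBconv hBcl y)
    _ ≤ ∑ i : Fin d, volume
        ({x : E d | x ∈ Metric.ball y R ∧ x ∈ B ∧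
            x + (r * Real.sqrt d) • (EuclideanSpace.single i 1 : E d) ∉ B} ∪
         {x : E d | x ∈ Metric.ball y R ∧ x ∈ B ∧
            x + (-(r * Real.sqrt d)) • (EuclideanSpace.single i 1 : E d) ∉ B}) :=
        measure_iUnion_fintype_le _ _
    _ ≤ ∑ _i : Fin d, (b + b) := by
        refine Finset.sum_le_sum fun i _ => (measure_union_le _ _).trans (add_le_add ?_ ?_)
        · exact (hA i _).trans_eq (by rw [habs1])
        · exact (hA i _).trans_eq (by rw [habs2])
    _ = (d : ℝ≥0∞) * (b + b) := by
        rw [Finset.sum_const, Finset.card_univ, Fintype.card_fin, nsmul_eq_mul]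
    _ ≤ ENNReal.ofReal (2 * r * (d : ℝ) * Real.sqrt d * ubVol (d - 1) * R ^ (d - 1)) := by
        have h1 : b + b = ENNReal.ofReal
            (2 * ((r * Real.sqrt d) * (ubVol (d-1) * R^(d-1)))) := by
          rw [hb, ← ENNReal.ofReal_mul (by positivity), ← two_mul, ← ENNReal.ofReal_ofNat 2,
            ← ENNReal.ofReal_mul (by norm_num)]
        rw [h1, ← ENNReal.ofReal_natCast d, ← ENNReal.ofReal_mul (by positivity)]
        apply ENNReal.ofReal_le_ofReal
        have hub : 0 ≤ ubVol (d-1) := Stmt10Aux.ubVol_nonneg _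
        apply le_of_eq
        ring
end
end

section
/- Let d ≥ 1, let 0 < r < R, let B ⊆ ℝ^d be a convex body, and let x ∈ ℝ^d. Then λ( B(x,R) ∩ B ∩ N_r(B^c) ) ≤ V(d)·(R^d − (R−r)^d), where V(d) is the Lebesgue measure of the unit ball in ℝ^d. -/
open Finset Metric MeasureTheory
open scoped BigOperators ENNReal RealInnerProductSpace

noncomputable section

namespace Stmt11Aux
open Module

variable {d : ℕ}

/-- An expanding map does not decrease the volume of a set. -/
lemma volume_le_image {s : Set (E d)} {f : E d → E d}
    (hf : ∀ y ∈ s, ∀ z ∈ s, dist y z ≤ dist (f y) (f z)) :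
    volume s ≤ volume (f '' s) := by
  have hvol : (volume : Measure (E d)) =
      (Measure.addHaarScalarFactor (volume : Measure (E d)) μH[finrank ℝ (E d)]) •
        μH[finrank ℝ (E d)] :=
    MeasureTheory.Measure.isAddLeftInvariant_eq_smul _ _
  have hinj : Set.InjOn f s := by
    intro a ha b hb hab
    have h := hf a ha b hb
    rw [hab, dist_self] at h
    exact dist_le_zero.mp h
  set g := Function.invFunOn f s with hg
  have hmem : ∀ w ∈ f '' s, g w ∈ s := fun w hw =>
    Function.invFunOn_mem ((Set.mem_image _ _ _).mp hw)
  have hfg : ∀ w ∈ f '' s, f (g w) = w := fun w hw =>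
    Function.invFunOn_eq ((Set.mem_image _ _ _).mp hw)
  have hglip : LipschitzOnWith 1 g (f '' s) := by
    rw [lipschitzOnWith_iff_dist_le_mul]
    intro a ha b hb
    have h1 := hf (g a) (hmem a ha) (g b) (hmem b hb)
    rw [hfg a ha, hfg b hb] at h1
    simpa using h1
  have hseq : g '' (f '' s) = s := by
    apply Set.Subset.antisymm
    · rintro w ⟨a, ha, rfl⟩; exact hmem a ha
    · intro y hy
      refine ⟨f y, Set.mem_image_of_mem f hy, ?_⟩
      exact hinj (hmem _ (Set.mem_image_of_mem f hy)) hy (hfg _ (Set.mem_image_of_mem f hy))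
  have hH : μH[(finrank ℝ (E d) : ℝ)] s ≤ μH[(finrank ℝ (E d) : ℝ)] (f '' s) := by
    have h2 := hglip.hausdorffMeasure_image_le
      (by positivity : (0:ℝ) ≤ (finrank ℝ (E d) : ℝ))
    rw [hseq] at h2
    simpa using h2
  rw [hvol]
  simp only [Measure.smul_apply, ENNReal.smul_def, smul_eq_mul]
  exact mul_le_mul_right hH _

/-- Signed-distance bound from a supporting halfspace. -/
lemma sdist_le {B : Set (E d)} (hB : B.Nonempty)
    {u p : E d} (hu : ‖u‖ = 1) (hp : ∀ b ∈ B, ⟪u, b - p⟫ ≤ 0) (z : E d) :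
    infDist z Bᶜ - infDist z B ≤ -⟪u, z - p⟫ := by
  by_cases hz : z ∈ B
  · rw [infDist_zero_of_mem hz, sub_zero]
    have hzp : ⟪u, z - p⟫ ≤ 0 := hp z hz
    have hle : ∀ ε > (0:ℝ), infDist z Bᶜ ≤ -⟪u, z - p⟫ + ε := by
      intro ε hε
      set c : ℝ := -⟪u, z - p⟫ + ε with hc
      have hcpos : 0 < c := by simp only [hc]; linarith
      have hwB : z + c • u ∈ Bᶜ := by
        intro hwB
        have h2 := hp _ hwB
        have h3 : ⟪u, z + c • u - p⟫ = ⟪u, z - p⟫ + c * (‖u‖^2) := by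
          have : z + c • u - p = (z - p) + c • u := by abel
          rw [this, inner_add_right, real_inner_smul_right, real_inner_self_eq_norm_sq]
        rw [h3, hu] at h2
        simp only [hc] at h2
        nlinarith
      have h4 : infDist z Bᶜ ≤ dist z (z + c • u) := infDist_le_dist_of_mem hwB
      have h5 : dist z (z + c • u) = c := by
        rw [dist_eq_norm]
        have : z - (z + c • u) = (-c) • u := by
          rw [neg_smul]; abel
        rw [this, norm_smul, hu]
        simp [abs_of_pos hcpos]
      rw [h5] at h4
      simpa only [hc] using h4
    exact le_of_forall_pos_le_add hle
  · have hz' : z ∈ Bᶜ := hz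
    rw [infDist_zero_of_mem hz', zero_sub, neg_le_neg_iff]
    rcases le_or_gt ⟪u, z - p⟫ 0 with h | h
    · exact h.trans infDist_nonneg
    · by_contra hcon
      push_neg at hcon
      obtain ⟨b, hbB, hbd⟩ := (infDist_lt_iff hB).mp hcon
      have h1 : ⟪u, z - b⟫ = ⟪u, z - p⟫ - ⟪u, b - p⟫ := by
        rw [← inner_sub_right]
        congr 1
        abel
      have h2 : ⟪u, z - b⟫ ≤ ‖u‖ * ‖z - b‖ := real_inner_le_norm _ _
      rw [hu, one_mul, ← dist_eq_norm] at h2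
      have h3 := hp b hbB
      linarith

set_option maxHeartbeats 1000000 in
/-- Existence of a unit supergradient of the signed distance function of a closed
convex set, at any point off the frontier. -/
lemma exists_supergrad {B : Set (E d)} (hBconv : Convex ℝ B) (hBcl : IsClosed B)
    (hB : B.Nonempty) (hBc : Bᶜ.Nonempty) {y : E d} (hy : y ∉ frontier B) :
    ∃ u : E d, ‖u‖ = 1 ∧ ∀ z : E d,
      infDist z Bᶜ - infDist z B ≤ (infDist y Bᶜ - infDist y B) - ⟪u, z - y⟫ := by
  by_cases hyB : y ∈ B
  · -- interior case
    have hyc : y ∉ closure Bᶜ := fun h =>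
      hy (by rw [frontier_eq_closure_inter_closure]; exact ⟨subset_closure hyB, h⟩)
    have hCc : IsClosed (closure Bᶜ) := isClosed_closure
    have hCne : (closure Bᶜ).Nonempty := hBc.closure
    set φ := infDist y Bᶜ with hφdef
    have hφc : infDist y (closure Bᶜ) = φ := infDist_closure
    have hφ0 : 0 < φ := by
      rw [← hφc]; exact (hCc.notMem_iff_infDist_pos hCne).mp hyc
    obtain ⟨p, hpC, hpd⟩ := hCc.exists_infDist_eq_dist hCne y
    have hdyp : dist y p = φ := by rw [← hpd, hφc]
    have hnpy : ‖p - y‖ = φ := by rw [← dist_eq_norm, dist_comm]; exact hdyp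
    set u := φ⁻¹ • (p - y) with hu
    have hpu : p - y = φ • u := by
      rw [hu, smul_smul, mul_inv_cancel₀ hφ0.ne', one_smul]
    have hunorm : ‖u‖ = 1 := by
      rw [hu, norm_smul, norm_inv, Real.norm_of_nonneg hφ0.le, hnpy]
      field_simp
    have hball : ball y φ ⊆ B := by
      intro w hw
      by_contra hwB
      have h1 : φ ≤ dist y w := infDist_le_dist_of_mem (hwB : w ∈ Bᶜ)
      rw [mem_ball, dist_comm] at hw
      linarith
    have hsupp : ∀ b ∈ B, ⟪u, b - p⟫ ≤ 0 := by
      by_contra h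
      push_neg at h
      obtain ⟨b, hbB, hη⟩ := h
      set η := ⟪u, b - p⟫ with hηdef
      set M := ‖b - y‖ with hM
      have hM0 : (0:ℝ) ≤ M := norm_nonneg _
      set s : ℝ := min (1/2 : ℝ) (φ * η / (M^2 + 1)) with hs
      have hspos : 0 < s := lt_min (by norm_num) (by positivity)
      have hs12 : s ≤ 1/2 := min_le_left _ _
      have hsM : s * M^2 < φ * η := by
        have h1 : s ≤ φ * η / (M^2 + 1) := min_le_right _ _
        have h2 : (0:ℝ) < M^2 + 1 := by positivity
        have h1' : s * (M^2 + 1) ≤ φ * η := (le_div_iff₀ h2).mp h1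
        nlinarith
      set c := y + s • (b - y) with hc
      have h1s : (0:ℝ) < 1 - s := by linarith
      have hkey : ‖p - c‖^2 < ((1 - s) * φ)^2 := by
        have h1 : p - c = (p - y) - s • (b - y) := by rw [hc]; abel
        have h3 : ⟪p - y, b - y⟫ = φ * η + φ^2 := by
          have ha : ⟪p - y, b - p⟫ = φ * η := by
            rw [hηdef, hu, real_inner_smul_left]
            field_simp
          have hsplit : ⟪p - y, b - y⟫ = ⟪p - y, b - p⟫ + ⟪p - y, p - y⟫ := by
            rw [← inner_add_right]
            congr 1
            abel
          rw [hsplit, ha, real_inner_self_eq_norm_sq, hnpy]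
        have h2 : ‖p - c‖^2 = φ^2 - 2 * (s * (φ * η + φ^2)) + s^2 * M^2 := by
          rw [h1, norm_sub_sq_real, real_inner_smul_right, h3, norm_smul,
            Real.norm_of_nonneg hspos.le, hnpy]
          rw [mul_pow]
        have h4 : ((1 - s) * φ)^2 = φ^2 - 2*s*φ^2 + s^2 * φ^2 := by ring
        rw [h2, h4]
        nlinarith [sq_nonneg (s*φ), hspos, hη, hφ0]
      have hlt : ‖p - c‖ < (1 - s) * φ := by
        nlinarith [norm_nonneg (p - c), mul_pos h1s hφ0]
      have hsub : ball c ((1-s)*φ) ⊆ B := by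
        intro w' hw'
        set w := y + (1-s)⁻¹ • (w' - c) with hwdef
        have hwy : dist w y < φ := by
          rw [dist_eq_norm, hwdef]
          have : y + (1-s)⁻¹ • (w' - c) - y = (1-s)⁻¹ • (w' - c) := by abel
          rw [this, norm_smul, norm_inv, Real.norm_of_nonneg h1s.le]
          rw [mem_ball, dist_eq_norm] at hw'
          calc (1-s)⁻¹ * ‖w' - c‖ < (1-s)⁻¹ * ((1-s)*φ) := by
                apply mul_lt_mul_of_pos_left hw' (inv_pos.mpr h1s)
            _ = φ := by field_simp
        have hwB : w ∈ B := hball (mem_ball.mpr hwy)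
        have hcomb : w' = (1-s) • w + s • b := by
          rw [hwdef, smul_add, smul_inv_smul₀ h1s.ne', hc]
          match_scalars <;> ring
        rw [hcomb]
        exact hBconv hwB hbB h1s.le hspos.le (by ring)
      obtain ⟨q, hq, hqd⟩ := Metric.mem_closure_iff.mp hpC ((1-s)*φ - ‖p - c‖) (by linarith)
      have hqball : q ∈ ball c ((1-s)*φ) := by
        rw [mem_ball]
        calc dist q c ≤ dist q p + dist p c := dist_triangle _ _ _
          _ < ((1-s)*φ - ‖p - c‖) + ‖p - c‖ := by
              rw [dist_comm q p, dist_eq_norm]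
              exact add_lt_add_left hqd _
          _ = (1-s)*φ := by ring
      exact hq (hsub hqball)
    refine ⟨u, hunorm, fun z => ?_⟩
    have h1 := sdist_le hB hunorm hsupp z
    have h2 : ⟪u, p - y⟫ = φ := by
      rw [hpu, real_inner_smul_right, real_inner_self_eq_norm_sq, hunorm]
      ring
    have h3 : infDist y B = 0 := infDist_zero_of_mem hyB
    have h4 : ⟪u, z - p⟫ = ⟪u, z - y⟫ - ⟪u, p - y⟫ := by
      rw [← inner_sub_right]
      congr 1
      abel
    rw [h3]
    rw [h4, h2] at h1
    linarith
  · -- exterior case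
    have hBcomp : IsComplete B := hBcl.isComplete
    obtain ⟨p, hpB, hproj⟩ := exists_norm_eq_iInf_of_complete_convex hB hBcomp hBconv y
    have hsupp0 : ∀ w ∈ B, ⟪y - p, w - p⟫ ≤ 0 :=
      (norm_eq_iInf_iff_real_inner_le_zero hBconv hpB).mp hproj
    set δ := ‖y - p‖ with hδ
    have hδ0 : 0 < δ := by
      rw [hδ, norm_pos_iff, sub_ne_zero]
      rintro rfl
      exact hyB hpB
    set u := δ⁻¹ • (y - p) with hu
    have hunorm : ‖u‖ = 1 := by
      rw [hu, norm_smul, norm_inv, Real.norm_of_nonneg hδ0.le, ← hδ]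
      field_simp
    have hsupp : ∀ b ∈ B, ⟪u, b - p⟫ ≤ 0 := by
      intro b hb
      rw [hu, real_inner_smul_left]
      exact mul_nonpos_of_nonneg_of_nonpos (inv_nonneg.mpr hδ0.le) (hsupp0 b hb)
    refine ⟨u, hunorm, fun z => ?_⟩
    have h1 := sdist_le hB hunorm hsupp z
    have h2 : ⟪u, y - p⟫ = δ := by
      rw [hu, real_inner_smul_left, real_inner_self_eq_norm_sq, ← hδ]
      field_simp
    have h3 : infDist y Bᶜ = 0 := infDist_zero_of_mem (hyB : y ∈ Bᶜ)
    have h4 : infDist y B ≤ δ := by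
      rw [hδ, ← dist_eq_norm]
      exact infDist_le_dist_of_mem hpB
    have h5 : ⟪u, z - p⟫ = ⟪u, z - y⟫ + ⟪u, y - p⟫ := by
      rw [← inner_add_right]
      congr 1
      abel
    rw [h5, h2] at h1
    rw [h3]
    linarith

end Stmt11Aux

/-- Lemma 10 of the paper (sharp isoperimetric inequality for inner shells):
`λ(B(x,R) ∩ B ∩ N_r(Bᶜ)) ≤ V(d)·(R^d − (R−r)^d)`. -/

theorem stmt_11 (d : ℕ) (hd : 1 ≤ d) (r R : ℝ) (hr : 0 < r) (hrR : r < R)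
    (B : Set (E d))
    (hBconv : Convex ℝ B) (hBcl : IsClosed B) (hBint : (interior B).Nonempty)
    (x : E d) :
    volume (Metric.ball x R ∩ B ∩ Metric.thickening r Bᶜ) ≤
      ENNReal.ofReal (ubVol d * (R ^ d - (R - r) ^ d)) := by
  classical
  set A := Metric.ball x R ∩ B ∩ Metric.thickening r Bᶜ with hA
  rcases Set.eq_empty_or_nonempty Bᶜ with hBc | hBc
  · rw [hA, hBc, Metric.thickening_empty, Set.inter_empty]
    simp
  have hB : B.Nonempty := hBint.mono interior_subset
  haveI : Nontrivial (E d) := by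
    apply Module.nontrivial_of_finrank_pos (R := ℝ) (M := E d)
    rw [finrank_euclideanSpace_fin]
    omega
  have hnd : Module.finrank ℝ (E d) = d := finrank_euclideanSpace_fin
  set sd : E d → ℝ := fun y => infDist y Bᶜ - infDist y B with hsd
  have hex : ∀ y : E d, ∃ u : E d,
      y ∉ frontier B → (‖u‖ = 1 ∧ ∀ z, sd z ≤ sd y - ⟪u, z - y⟫) := by
    intro y
    by_cases hy : y ∈ frontier B
    · exact ⟨0, fun h => absurd hy h⟩
    · obtain ⟨u, h1, h2⟩ := Stmt11Aux.exists_supergrad hBconv hBcl hB hBc hy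
      exact ⟨u, fun _ => ⟨h1, h2⟩⟩
  choose U hU using hex
  set W : E d → E d := fun y => if r ≤ sd y then 0 else U y with hW
  set Φ : E d → E d := fun y => y + r • W y with hΦ
  set D := Metric.ball x (R - r) \ frontier B with hD
  have hWmono : ∀ y, y ∉ frontier B → ∀ z, z ∉ frontier B →
      0 ≤ ⟪W y - W z, y - z⟫ := by
    intro y hy z hz
    have ey : ∀ v : E d, ⟪v, y - z⟫ = -⟪v, z - y⟫ := by
      intro v
      rw [← inner_neg_right]
      congr 1
      abel
    rcases le_or_gt r (sd y) with h1 | h1 <;> rcases le_or_gt r (sd z) with h2 | h2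
    · simp only [hW, if_pos h1, if_pos h2, sub_self, inner_zero_left, le_refl]
    · have hz2 := (hU z hz).2 y
      simp only [hW, if_pos h1, if_neg (not_le.mpr h2), zero_sub, inner_neg_left]
      linarith
    · have hy2 := (hU y hy).2 z
      simp only [hW, if_neg (not_le.mpr h1), if_pos h2, sub_zero]
      rw [ey]
      linarith
    · have hy2 := (hU y hy).2 z
      have hz2 := (hU z hz).2 y
      simp only [hW, if_neg (not_le.mpr h1), if_neg (not_le.mpr h2)]
      rw [inner_sub_left, ey (U y)]
      linarith
  have hexp : ∀ y ∈ D, ∀ z ∈ D, dist y z ≤ dist (Φ y) (Φ z) := by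
    intro y hy z hz
    rw [dist_eq_norm, dist_eq_norm]
    have hΦyz : Φ y - Φ z = (y - z) + r • (W y - W z) := by
      simp only [hΦ, smul_sub]
      abel
    have key : ‖y - z‖^2 ≤ ‖Φ y - Φ z‖^2 := by
      rw [hΦyz, norm_add_sq_real]
      have h0 : 0 ≤ ⟪y - z, r • (W y - W z)⟫ := by
        rw [real_inner_smul_right, real_inner_comm]
        exact mul_nonneg hr.le (hWmono y hy.2 z hz.2)
      nlinarith [sq_nonneg ‖r • (W y - W z)‖]
    nlinarith [norm_nonneg (y - z), norm_nonneg (Φ y - Φ z)]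
  have himg : ∀ y ∈ D, Φ y ∈ Metric.ball x R \ A := by
    intro y hy
    obtain ⟨hyb, hyf⟩ := hy
    rw [mem_ball] at hyb
    rcases le_or_gt r (sd y) with h1 | h1
    · have hΦy : Φ y = y := by
        simp only [hΦ, hW, if_pos h1, smul_zero, add_zero]
      rw [hΦy]
      constructor
      · rw [mem_ball]
        linarith
      · rintro ⟨-, hthick⟩
        rw [Metric.mem_thickening_iff_infDist_lt hBc] at hthick
        have h2 : 0 ≤ infDist y B := infDist_nonneg
        simp only [hsd] at h1
        linarith
    · have hUy := hU y hyf
      have hΦy : Φ y = y + r • U y := by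
        simp only [hΦ, hW, if_neg (not_le.mpr h1)]
      have hΦyy : Φ y - y = r • U y := by rw [hΦy]; abel
      constructor
      · rw [mem_ball]
        calc dist (Φ y) x ≤ dist (Φ y) y + dist y x := dist_triangle _ _ _
          _ < r + (R - r) := by
              apply add_lt_add_of_le_of_lt _ hyb
              rw [dist_eq_norm, hΦyy, norm_smul, Real.norm_of_nonneg hr.le, hUy.1, mul_one]
          _ = R := by ring
      · rintro ⟨⟨-, hmemB⟩, -⟩
        have hsup := hUy.2 (Φ y)
        have hinner : ⟪U y, Φ y - y⟫ = r := by
          rw [hΦyy, real_inner_smul_right, real_inner_self_eq_norm_sq, hUy.1]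
          ring
        rw [hinner] at hsup
        have hB0 : infDist (Φ y) B = 0 := infDist_zero_of_mem hmemB
        have hBc0 : 0 ≤ infDist (Φ y) Bᶜ := infDist_nonneg
        simp only [hsd] at hsup h1
        rw [hB0] at hsup
        have h2 : 0 ≤ infDist y B := infDist_nonneg
        linarith
  have hA_meas : MeasurableSet A :=
    (Metric.isOpen_ball.measurableSet.inter hBcl.measurableSet).inter
      Metric.isOpen_thickening.measurableSet
  have hAsub : A ⊆ Metric.ball x R := fun z hz => hz.1.1
  have hfr0 : volume (frontier B) = 0 := hBconv.addHaar_frontier volume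
  have hDvol : volume D = volume (Metric.ball x (R - r)) := measure_diff_null hfr0
  have h1 : volume (Metric.ball x (R - r)) ≤ volume (Φ '' D) := by
    rw [← hDvol]
    exact Stmt11Aux.volume_le_image hexp
  have h2 : volume (Φ '' D) ≤ volume (Metric.ball x R \ A) := by
    apply measure_mono
    rintro w ⟨yy, hyy, rfl⟩
    exact himg yy hyy
  have h3 : volume (Metric.ball x R \ A) + volume A = volume (Metric.ball x R) := by
    have h := measure_diff_add_inter (μ := (volume : Measure (E d))) (Metric.ball x R) hA_meas
    rwa [Set.inter_eq_self_of_subset_right hAsub] at h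
  set V1 := volume (Metric.ball (0 : E d) 1) with hV1
  have hVtop : V1 ≠ ⊤ := measure_ball_lt_top.ne
  have hR0 : (0:ℝ) ≤ R := by linarith
  have hRr0 : (0:ℝ) ≤ R - r := by linarith
  have hbR : volume (Metric.ball x R) = ENNReal.ofReal (R ^ d) * V1 := by
    rw [hV1, Measure.addHaar_ball volume x hR0, hnd]
  have hbRr : volume (Metric.ball x (R - r)) = ENNReal.ofReal ((R - r) ^ d) * V1 := by
    rw [hV1, Measure.addHaar_ball volume x hRr0, hnd]
  have hmono : (R - r)^d ≤ R^d := pow_le_pow_left₀ hRr0 (by linarith) d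
  have hc0 : (0:ℝ) ≤ R^d - (R-r)^d := by linarith
  have hofreal : ENNReal.ofReal (ubVol d * (R^d - (R-r)^d))
      = ENNReal.ofReal (R^d - (R-r)^d) * V1 := by
    rw [ubVol, mul_comm, ENNReal.ofReal_mul hc0, ENNReal.ofReal_toReal hVtop]
  have hsplit : ENNReal.ofReal (R^d)
      = ENNReal.ofReal (R^d - (R-r)^d) + ENNReal.ofReal ((R-r)^d) := by
    rw [← ENNReal.ofReal_add hc0 (by positivity)]
    ring_nf
  have hballs : volume (Metric.ball x R)
      = ENNReal.ofReal (ubVol d * (R^d - (R-r)^d)) + volume (Metric.ball x (R - r)) := by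
    rw [hbR, hbRr, hofreal, hsplit, add_mul]
  have hchain : volume A + volume (Metric.ball x (R - r))
      ≤ ENNReal.ofReal (ubVol d * (R^d - (R-r)^d)) + volume (Metric.ball x (R - r)) := by
    calc volume A + volume (Metric.ball x (R - r))
        ≤ volume A + volume (Metric.ball x R \ A) := by
          exact add_le_add_right (h1.trans h2) _
      _ = volume (Metric.ball x R) := by rw [add_comm]; exact h3
      _ = _ := hballs
  have hfin2 : volume (Metric.ball x (R - r)) ≠ ⊤ := measure_ball_lt_top.ne
  exact (ENNReal.add_le_add_iff_right hfin2).mp hchain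
end
end

section
/- Let B ⊆ ℝ^d be a convex body and suppose r₀ > 0 is such that b := inf_{x ∈ B} λ(B(x,r₀) ∩ B) > 0. Let X be a set of M ≥ 2 distinct points of B with A(X) ≤ r₀. Then λ( Keep(X;B) ) ≥ (b / r₀^d) · A(X)^d. -/
open Finset Metric MeasureTheory
open scoped BigOperators ENNReal RealInnerProductSpace

noncomputable section

/-- If `B` has uniform geometry with parameters `r₀` and
`b = inf_{x ∈ B} λ(B(x,r₀) ∩ B) > 0`, then for a configuration `X ⊆ B` with
`A(X) ≤ r₀` we have `λ(Keep(X;B)) ≥ (b / r₀^d) · A(X)^d`. -/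
theorem stmt_16 (d : ℕ) (B : Set (E d))
    (hBconv : Convex ℝ B) (hBcl : IsClosed B) (hBint : (interior B).Nonempty)
    (r₀ : ℝ) (hr₀ : 0 < r₀)
    (hb : 0 < ⨅ x ∈ B, volume (Metric.ball x r₀ ∩ B))
    (X : Finset (E d)) (hX : 2 ≤ X.card) (hXB : ↑X ⊆ B) (hA : Amax X ≤ r₀) :
    (⨅ x ∈ B, volume (Metric.ball x r₀ ∩ B)) *
        ENNReal.ofReal (Amax X ^ d / r₀ ^ d) ≤ volume (Keep X B) := by
  classical
  set μ₀ := cm X with hμ₀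
  set A := Amax X with hAdef
  have hXne : X.Nonempty := Finset.card_pos.mp (by omega)
  have hMpos : (0:ℝ) < X.card := by exact_mod_cast Finset.card_pos.mpr hXne
  -- center of mass is in B
  have hμ₀B : μ₀ ∈ B := by
    have : μ₀ = ∑ x ∈ X, (X.card : ℝ)⁻¹ • x := by
      rw [hμ₀, cm, csum, Finset.smul_sum]
    rw [this]
    refine hBconv.sum_mem (fun i _ => by positivity) ?_ (fun i hi => hXB hi)
    rw [Finset.sum_const, nsmul_eq_mul, mul_inv_cancel₀ (ne_of_gt hMpos)]
  -- facts about A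
  have hfin : ((fun w => ‖w - μ₀‖) '' (X : Set (E d))).Finite :=
    X.finite_toSet.image _
  have hnem : ((fun w => ‖w - μ₀‖) '' (X : Set (E d))).Nonempty :=
    (hXne.to_set).image _
  have hmemA : A ∈ (fun w => ‖w - μ₀‖) '' (X : Set (E d)) := hnem.csSup_mem hfin
  obtain ⟨w, hwX, hwA⟩ := hmemA
  have hub : ∀ s ∈ X, ‖s - μ₀‖ ≤ A := fun s hs =>
    le_csSup hfin.bddAbove ⟨s, hs, rfl⟩
  have hApos : 0 < A := by
    obtain ⟨x, hx, y, hy, hxy⟩ := Finset.one_lt_card.mp hX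
    by_contra h
    push_neg at h
    have hx0 : x = μ₀ := by
      have h1 : ‖x - μ₀‖ ≤ 0 := (hub x hx).trans h
      have := norm_nonneg (x - μ₀)
      have : ‖x - μ₀‖ = 0 := le_antisymm h1 this
      rwa [norm_eq_zero, sub_eq_zero] at this
    have hy0 : y = μ₀ := by
      have h1 : ‖y - μ₀‖ ≤ 0 := (hub y hy).trans h
      have := norm_nonneg (y - μ₀)
      have : ‖y - μ₀‖ = 0 := le_antisymm h1 this
      rwa [norm_eq_zero, sub_eq_zero] at this
    exact hxy (hx0.trans hy0.symm)
  -- the open ball of radius A around μ₀ (intersected with B) lies in Keep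
  have hball : Metric.ball μ₀ A ∩ B ⊆ Keep X B := by
    rintro x ⟨hxball, hxB⟩
    have hxn : ‖x - μ₀‖ < A := by rwa [Metric.mem_ball, dist_eq_norm] at hxball
    refine ⟨hxB, ?_⟩
    by_cases hx : x ∈ X
    · have hins : insert x X = X := Finset.insert_eq_self.mpr hx
      rw [hins]
      exact hxn
    · set M : ℝ := (X.card : ℝ) with hM
      have hM1 : (0:ℝ) < M + 1 := by linarith
      have hcs : csum X = M • μ₀ := by
        rw [hμ₀, cm, smul_inv_smul₀ (ne_of_gt hMpos)]
      have hμ' : cm (insert x X) = (M + 1)⁻¹ • (x + M • μ₀) := by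
        rw [cm, csum, Finset.sum_insert hx, Finset.card_insert_of_notMem hx]
        rw [show (∑ y ∈ X, y) = csum X from rfl, hcs]
        congr 1
        push_cast
        rw [hM]
      have h1 : x - cm (insert x X) = (M / (M + 1)) • (x - μ₀) := by
        rw [hμ']
        match_scalars <;> field_simp <;> ring
      have h2 : cm (insert x X) - μ₀ = (M + 1)⁻¹ • (x - μ₀) := by
        rw [hμ']
        match_scalars <;> field_simp <;> ring
      have hn1 : ‖x - cm (insert x X)‖ = (M / (M + 1)) * ‖x - μ₀‖ := by
        rw [h1, norm_smul, Real.norm_eq_abs, abs_of_nonneg (by positivity)]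
      have hn2 : ‖cm (insert x X) - μ₀‖ = (M + 1)⁻¹ * ‖x - μ₀‖ := by
        rw [h2, norm_smul, Real.norm_eq_abs, abs_of_nonneg (by positivity)]
      have hfin' : ((fun s => ‖s - cm (insert x X)‖) '' (X : Set (E d))).Finite :=
        X.finite_toSet.image _
      have hle : ‖w - cm (insert x X)‖ ≤
          sSup ((fun s => ‖s - cm (insert x X)‖) '' (X : Set (E d))) :=
        le_csSup hfin'.bddAbove ⟨w, hwX, rfl⟩
      have htri : ‖w - μ₀‖ ≤ ‖w - cm (insert x X)‖ + ‖cm (insert x X) - μ₀‖ :=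
        norm_sub_le_norm_sub_add_norm_sub w (cm (insert x X)) μ₀
      have hkey : ‖x - cm (insert x X)‖ < ‖w - cm (insert x X)‖ := by
        rw [hn1]
        have hwlb : A - (M + 1)⁻¹ * ‖x - μ₀‖ ≤ ‖w - cm (insert x X)‖ := by
          rw [← hwA] at *
          linarith [htri, hn2.symm.le, hn2.le]
        have hsum : (M / (M + 1)) * ‖x - μ₀‖ + (M + 1)⁻¹ * ‖x - μ₀‖ = ‖x - μ₀‖ := by
          field_simp
        nlinarith [hxn, norm_nonneg (x - μ₀)]
      exact lt_of_lt_of_le hkey hle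
  -- scaling argument
  set t := A / r₀ with ht
  have htpos : 0 < t := div_pos hApos hr₀
  have ht1 : t ≤ 1 := (div_le_one hr₀).mpr hA
  have himg : (fun y => (1 - t) • μ₀ + t • y) '' (Metric.ball μ₀ r₀ ∩ B) ⊆
      Metric.ball μ₀ A ∩ B := by
    rintro _ ⟨y, ⟨hyb, hyB⟩, rfl⟩
    have hyn : ‖y - μ₀‖ < r₀ := by rwa [Metric.mem_ball, dist_eq_norm] at hyb
    constructor
    · rw [Metric.mem_ball, dist_eq_norm]
      have he : (1 - t) • μ₀ + t • y - μ₀ = t • (y - μ₀) := by module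
      rw [he, norm_smul, Real.norm_eq_abs, abs_of_pos htpos]
      calc t * ‖y - μ₀‖ < t * r₀ := mul_lt_mul_of_pos_left hyn htpos
        _ = A := by rw [ht]; exact div_mul_cancel₀ A hr₀.ne'
    · exact hBconv hμ₀B hyB (by linarith) htpos.le (by ring)
  have hvol : volume ((fun y => (1 - t) • μ₀ + t • y) '' (Metric.ball μ₀ r₀ ∩ B))
      = ENNReal.ofReal (t ^ d) * volume (Metric.ball μ₀ r₀ ∩ B) := by
    have hcomp : (fun y : E d => (1 - t) • μ₀ + t • y)
        = (fun z : E d => (1 - t) • μ₀ +ᵥ z) ∘ (fun y : E d => t • y) := rfl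
    rw [hcomp, Set.image_comp, Set.image_smul, Set.image_vadd, measure_vadd,
      Measure.addHaar_smul, finrank_euclideanSpace_fin, abs_of_pos (pow_pos htpos d)]
  calc (⨅ x ∈ B, volume (Metric.ball x r₀ ∩ B)) * ENNReal.ofReal (A ^ d / r₀ ^ d)
      ≤ volume (Metric.ball μ₀ r₀ ∩ B) * ENNReal.ofReal (t ^ d) := by
        gcongr
        · exact biInf_le _ hμ₀B
        · rw [ht, div_pow]
    _ = ENNReal.ofReal (t ^ d) * volume (Metric.ball μ₀ r₀ ∩ B) := mul_comm _ _
    _ = volume ((fun y => (1 - t) • μ₀ + t • y) '' (Metric.ball μ₀ r₀ ∩ B)) := hvol.symm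
    _ ≤ volume (Metric.ball μ₀ A ∩ B) := measure_mono himg
    _ ≤ volume (Keep X B) := measure_mono hball
end
end

section
/- Let d ≥ 1, let B ⊆ ℝ^d be a convex body, let r > 0, and let x ∈ B be such that there exists z ∈ ∂B with ‖x − z‖ ≤ r. Then there exist an index i ∈ {1, …, d} and a real number t with |t| ≤ r·√d such that x + t·e_i ∈ ∂B, where e_1, …, e_d is the standard orthonormal basis of ℝ^d. -/
open Finset Metric MeasureTheory
open scoped BigOperators ENNReal RealInnerProductSpace

noncomputable section

lemma cross_frontier {X : Type*} [TopologicalSpace X] {B : Set X} (hB : IsClosed B)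
    {c : ℝ → X} (hc : Continuous c) (h0 : c 0 ∈ B) (h1 : c 1 ∉ B) :
    ∃ s ∈ Set.Icc (0:ℝ) 1, c s ∈ frontier B := by
  classical
  set S := Set.Icc (0:ℝ) 1 ∩ c ⁻¹' B with hS
  have hSc : IsClosed S := isClosed_Icc.inter (hB.preimage hc)
  have hne : S.Nonempty := ⟨0, by simp [hS, h0]⟩
  have hbdd : BddAbove S := BddAbove.mono Set.inter_subset_left bddAbove_Icc
  set T := sSup S with hTdef
  have hT : T ∈ S := hSc.csSup_mem hne hbdd
  refine ⟨T, hT.1, ?_⟩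
  rw [hB.frontier_eq]
  refine ⟨hT.2, fun hint => ?_⟩
  have hT1 : T < 1 := lt_of_le_of_ne hT.1.2 (fun hTe => h1 (hTe ▸ hT.2))
  have hmem : c ⁻¹' interior B ∈ nhds T := (isOpen_interior.preimage hc).mem_nhds hint
  obtain ⟨ε, hε, hball⟩ := Metric.mem_nhds_iff.1 hmem
  set s := min (T + ε/2) 1 with hsdef
  have hsT : T < s := lt_min (by linarith) hT1
  have hsS : s ∈ S := by
    refine ⟨⟨le_trans hT.1.1 hsT.le, min_le_right _ _⟩, ?_⟩
    have hsε : s ∈ Metric.ball T ε := by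
      rw [Metric.mem_ball, Real.dist_eq, abs_of_pos (by linarith)]
      have : s ≤ T + ε/2 := min_le_left _ _
      linarith
    have hcsi : c s ∈ interior B := hball hsε
    exact Set.mem_preimage.mpr (interior_subset hcsi)
  exact absurd (le_csSup hbdd hsS) (not_le.2 hsT)

lemma euclid_clm_repr {d : ℕ} (f : EuclideanSpace ℝ (Fin d) →L[ℝ] ℝ)
    (y : EuclideanSpace ℝ (Fin d)) :
    f y = ∑ i, y i * f (EuclideanSpace.single i (1:ℝ)) := by
  have hy : ∑ i, y i • EuclideanSpace.single i (1:ℝ) = y := by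
    have h := (EuclideanSpace.basisFun (Fin d) ℝ).sum_repr y
    simpa [EuclideanSpace.basisFun_apply, EuclideanSpace.basisFun_repr] using h
  conv_lhs => rw [← hy]
  rw [map_sum]
  simp [smul_eq_mul]

lemma euclid_inner_symm {d : ℕ} (ν : Fin d → ℝ) (y : EuclideanSpace ℝ (Fin d)) :
    ⟪(WithLp.equiv 2 (Fin d → ℝ)).symm ν, y⟫ = ∑ i, y i * ν i := by
  simp [PiLp.inner_apply, RCLike.inner_apply, mul_comm]

lemma euclid_norm_symm_le {d : ℕ} (ν : Fin d → ℝ) (M : ℝ)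
    (hM : ∀ i, |ν i| ≤ M) (hM0 : 0 ≤ M) :
    ‖(WithLp.equiv 2 (Fin d → ℝ)).symm ν‖ ≤ Real.sqrt d * M := by
  rw [EuclideanSpace.norm_eq]
  rw [← Real.sqrt_sq hM0, ← Real.sqrt_mul (Nat.cast_nonneg d)]
  apply Real.sqrt_le_sqrt
  calc ∑ i, ‖((WithLp.equiv 2 (Fin d → ℝ)).symm ν) i‖ ^ 2
      = ∑ i : Fin d, |ν i| ^ 2 := by simp [Real.norm_eq_abs]
    _ ≤ ∑ _i : Fin d, M ^ 2 := Finset.sum_le_sum fun i _ => by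
        have := hM i; nlinarith [abs_nonneg (ν i)]
    _ = d * M ^ 2 := by simp [mul_comm]

/-- If `x ∈ B` is within distance `r` of the boundary of the convex body `B`,
then some axis-parallel line through `x` meets `∂B` within distance `r·√d`. -/
theorem stmt_19 (d : ℕ) (hd : 1 ≤ d) (B : Set (E d))
    (hBconv : Convex ℝ B) (hBcl : IsClosed B) (hBint : (interior B).Nonempty)
    (r : ℝ) (hr : 0 < r) (x : E d) (hx : x ∈ B)
    (z : E d) (hz : z ∈ frontier B) (hxz : ‖x - z‖ ≤ r) :
    ∃ (i : Fin d) (t : ℝ), |t| ≤ r * Real.sqrt d ∧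
      x + t • EuclideanSpace.single i (1 : ℝ) ∈ frontier B := by
  classical
  have hrd : 0 < r * Real.sqrt d := by
    apply mul_pos hr
    have : (0:ℝ) < d := by exact_mod_cast Nat.lt_of_lt_of_le Nat.zero_lt_one hd
    exact Real.sqrt_pos.2 this
  -- Case 1: x is already on the frontier
  by_cases hxint : x ∈ interior B
  swap
  · refine ⟨⟨0, hd⟩, 0, by simpa using hrd.le, ?_⟩
    rw [hBcl.frontier_eq]
    exact ⟨by simpa using hx, by simpa using hxint⟩
  -- Separating functional at z
  have hzint : z ∉ interior B := hz.2
  obtain ⟨f, hf⟩ := geometric_hahn_banach_open_point hBconv.interior isOpen_interior hzint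
  -- f ≤ f z on all of B
  have hfB : ∀ b ∈ B, f b ≤ f z := by
    intro b hb
    obtain ⟨w, hw⟩ := hBint
    by_contra hlt
    push_neg at hlt
    have hcont : Continuous fun t : ℝ => f b + t * (f (w - b)) := by continuity
    have htend : Filter.Tendsto (fun t : ℝ => f b + t * (f (w - b))) (nhds 0) (nhds (f b)) := by
      have := hcont.tendsto 0
      simpa using this
    have hev : ∀ᶠ t in nhds (0:ℝ), f z < f b + t * (f (w - b)) :=
      htend.eventually (eventually_gt_nhds hlt)
    obtain ⟨δ, hδ, hδ'⟩ := Metric.eventually_nhds_iff.1 hev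
    set t := min (δ/2) 1 with ht
    have ht0 : 0 < t := lt_min (by linarith) one_pos
    have ht1 : t ≤ 1 := min_le_right _ _
    have htmem : t ∈ Set.Ioc (0:ℝ) 1 := ⟨ht0, ht1⟩
    have hintmem : b + t • (w - b) ∈ interior B :=
      hBconv.add_smul_sub_mem_interior hb hw htmem
    have h1 : f (b + t • (w - b)) < f z := hf _ hintmem
    have h2 : f z < f (b + t • (w - b)) := by
      have hd' : dist t 0 < δ := by
        rw [Real.dist_eq, sub_zero, abs_of_pos ht0]
        calc t ≤ δ/2 := min_le_left _ _
          _ < δ := by linarith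
      have := hδ' hd'
      simpa [f.map_add, f.map_smul, smul_eq_mul] using this
    exact absurd h1 (not_lt.2 h2.le)
  -- coordinates of the functional
  set ν : Fin d → ℝ := fun i => f (EuclideanSpace.single i (1:ℝ)) with hν
  haveI : Nonempty (Fin d) := ⟨⟨0, hd⟩⟩
  obtain ⟨i₀, -, hi₀⟩ := Finset.univ.exists_max_image (fun i => |ν i|) ⟨Classical.arbitrary _, Finset.mem_univ _⟩
  set M := |ν i₀| with hM
  have hMmax : ∀ i, |ν i| ≤ M := fun i => hi₀ i (Finset.mem_univ i)
  have hM0 : 0 ≤ M := abs_nonneg _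
  -- key bound : f z - f x ≤ √d * M * r
  set w0 : EuclideanSpace ℝ (Fin d) := (WithLp.equiv 2 (Fin d → ℝ)).symm ν with hw0
  have hbound : f z - f x ≤ Real.sqrt d * M * r := by
    have h1 : f z - f x = f (z - x) := by rw [map_sub]
    have h2 : f (z - x) = ⟪w0, z - x⟫ := by
      rw [euclid_clm_repr f (z - x), euclid_inner_symm]
    have h3 : ⟪w0, z - x⟫ ≤ ‖w0‖ * ‖z - x‖ := real_inner_le_norm _ _
    have h4 : ‖w0‖ ≤ Real.sqrt d * M := euclid_norm_symm_le ν M hMmax hM0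
    have h5 : ‖z - x‖ ≤ r := by rwa [norm_sub_rev] at hxz
    calc f z - f x = ⟪w0, z - x⟫ := by rw [h1, h2]
      _ ≤ ‖w0‖ * ‖z - x‖ := h3
      _ ≤ (Real.sqrt d * M) * r :=
          mul_le_mul h4 h5 (norm_nonneg _) (by positivity)
  have hxltz : f x < f z := hf x hxint
  have hMpos : 0 < M := by nlinarith [Real.sqrt_nonneg (d:ℝ)]
  have hν₀ : ν i₀ ≠ 0 := fun h => by simp [hM, h] at hMpos
  set σ : ℝ := if 0 < ν i₀ then 1 else -1 with hσ
  have hσν : σ * ν i₀ = M := by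
    rcases lt_trichotomy (ν i₀) 0 with h | h | h
    · simp [hσ, not_lt.2 h.le, hM, abs_of_neg h]
    · exact absurd h hν₀
    · simp [hσ, h, hM, abs_of_pos h]
  have hσabs : |σ| = 1 := by
    rcases lt_or_ge 0 (ν i₀) with h | h
    · simp [hσ, h]
    · simp [hσ, not_lt.2 h]
  set t0 : ℝ := r * Real.sqrt d * σ with ht0
  have ht0abs : |t0| = r * Real.sqrt d := by
    rw [ht0, abs_mul, hσabs, mul_one, abs_of_pos hrd]
  set e : EuclideanSpace ℝ (Fin d) := EuclideanSpace.single i₀ (1:ℝ) with he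
  set p : EuclideanSpace ℝ (Fin d) := x + t0 • e with hp
  have hfp : f z ≤ f p := by
    have : f p = f x + t0 * ν i₀ := by
      rw [hp, map_add, f.map_smul, smul_eq_mul, he, hν]
    rw [this, ht0]
    have : r * Real.sqrt d * σ * ν i₀ = r * Real.sqrt d * M := by
      rw [mul_assoc, hσν]
    rw [this]
    nlinarith
  have hpint : p ∉ interior B := fun hpB => absurd (hf p hpB) (not_lt.2 hfp)
  by_cases hpB : p ∈ B
  · exact ⟨i₀, t0, le_of_eq ht0abs, by rw [hBcl.frontier_eq]; exact ⟨hpB, hpint⟩⟩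
  · -- the segment from x to p crosses the frontier
    set c : ℝ → EuclideanSpace ℝ (Fin d) := fun s => x + (s * t0) • e with hc
    have hcc : Continuous c := by
      apply continuous_const.add
      exact (continuous_id.mul continuous_const).smul continuous_const
    have hc0 : c 0 ∈ B := by simpa [hc] using hx
    have hc1 : c 1 ∉ B := by simpa [hc, ← hp] using hpB
    obtain ⟨s, hs, hsf⟩ := cross_frontier hBcl hcc hc0 hc1
    refine ⟨i₀, s * t0, ?_, hsf⟩
    rw [abs_mul, ht0abs]
    calc |s| * (r * Real.sqrt d) ≤ 1 * (r * Real.sqrt d) := by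
          apply mul_le_mul_of_nonneg_right _ hrd.le
          rw [abs_of_nonneg hs.1]; exact hs.2
      _ = r * Real.sqrt d := one_mul _
end
end
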